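/- arXiv:2211.01872 — 5 statements merged into one kernel-verified Lean document; each statement's English description precedes it below -/
import Mathlib

section
/- Let G_n be a sequence of graphs such that G_n has 2n vertices, minimum degree 2n − o(n), and contains a perfect matching, and let R_n be a uniformly random perfect matching of G_n. Then there exist a constant C and an N such that for all n ≥ N and every edge e of G_n, Pr(e ∈ R_n) ≤ C/n. -/
open SimpleGraph Filter

/-- `pm G` is the number of perfect matchings of the graph `G`. -/
noncomputable def pm {V : Type} [Fintype V] (G : SimpleGraph V) : ℕ :=
  Nat.card {P : G.Subgraph // P.IsPerfectMatching}

namespace PMAux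

variable {V : Type} [Fintype V] [DecidableEq V] {G : SimpleGraph V}

/-- Adjacency involutions: functional description of perfect matchings. -/
def Invol (G : SimpleGraph V) : Type := {f : V → V // Function.Involutive f ∧ ∀ x, G.Adj x (f x)}

instance : Finite (Invol G) := Subtype.finite

noncomputable def pmFun (P : G.Subgraph) (hP : P.IsPerfectMatching) (x : V) : V :=
  (SimpleGraph.Subgraph.isPerfectMatching_iff.mp hP x).choose

lemma pmFun_adj (P : G.Subgraph) (hP : P.IsPerfectMatching) (x : V) :
    P.Adj x (pmFun P hP x) :=
  (SimpleGraph.Subgraph.isPerfectMatching_iff.mp hP x).choose_spec.1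

lemma pmFun_eq_iff {P : G.Subgraph} {hP : P.IsPerfectMatching} {x w : V} :
    pmFun P hP x = w ↔ P.Adj x w := by
  constructor
  · rintro rfl; exact pmFun_adj P hP x
  · intro h
    exact ((SimpleGraph.Subgraph.isPerfectMatching_iff.mp hP x).choose_spec.2 w h).symm

def involSubgraph (f : Invol G) : G.Subgraph where
  verts := Set.univ
  Adj a b := f.1 a = b
  adj_sub := by rintro a b rfl; exact f.2.2 a
  edge_vert _ := Set.mem_univ _
  symm := ⟨by rintro a b rfl; exact f.2.1 a⟩

lemma involSubgraph_isPM (f : Invol G) : (involSubgraph f).IsPerfectMatching :=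
  SimpleGraph.Subgraph.isPerfectMatching_iff.mpr fun x =>
    ⟨f.1 x, rfl, fun y hy => (show f.1 x = y from hy).symm⟩

noncomputable def pmEquiv (G : SimpleGraph V) :
    {P : G.Subgraph // P.IsPerfectMatching} ≃ Invol G where
  toFun q := ⟨pmFun q.1 q.2,
    fun x => pmFun_eq_iff.mpr ((pmFun_adj q.1 q.2 x).symm),
    fun x => q.1.adj_sub (pmFun_adj q.1 q.2 x)⟩
  invFun f := ⟨involSubgraph f, involSubgraph_isPM f⟩
  left_inv q := by
    apply Subtype.ext
    refine SimpleGraph.Subgraph.ext ?_ ?_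
    · exact (Set.eq_univ_of_forall q.2.2).symm
    · funext a b
      exact propext (pmFun_eq_iff (P := q.1) (hP := q.2))
  right_inv f := Subtype.ext (funext fun x =>
    (pmFun_eq_iff (P := involSubgraph f) (hP := involSubgraph_isPM f)).mpr rfl)

lemma card_pm_eq (G : SimpleGraph V) : pm G = Nat.card (Invol G) := Nat.card_congr (pmEquiv G)

lemma card_edge_eq (G : SimpleGraph V) (u v : V) :
    Nat.card {P : G.Subgraph // P.IsPerfectMatching ∧ s(u,v) ∈ P.edgeSet}
      = Nat.card {g : Invol G // g.1 u = v} := by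
  apply Nat.card_congr
  refine (Equiv.subtypeSubtypeEquivSubtypeInter
      (fun P : G.Subgraph => P.IsPerfectMatching)
      (fun P : G.Subgraph => s(u,v) ∈ P.edgeSet)).symm.trans
    ((pmEquiv G).subtypeEquiv fun q => ?_)
  rw [SimpleGraph.Subgraph.mem_edgeSet]
  exact (pmFun_eq_iff (P := q.1) (hP := q.2)).symm

/-! ### The switching map -/

def switchFun (f : V → V) (v x : V) : V → V := fun z => Equiv.swap v x (f (Equiv.swap v x z))

lemma switchFun_involutive {f : V → V} (hf : Function.Involutive f) (v x : V) :
    Function.Involutive (switchFun f v x) := fun z => by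
  simp [switchFun, Equiv.swap_apply_self, hf _]

lemma switchFun_switchFun (f : V → V) (v x : V) : switchFun (switchFun f v x) v x = f :=
  funext fun z => by simp [switchFun, Equiv.swap_apply_self]

lemma switchFun_apply_u {f : V → V} {u v x : V}
    (hfu : f u = v) (huv : u ≠ v) (hux : u ≠ x) (hxv : x ≠ v) :
    switchFun f v x u = x := by
  unfold switchFun
  rw [Equiv.swap_apply_of_ne_of_ne huv hux, hfu, Equiv.swap_apply_left]

lemma switchFun_adj {f : V → V} (hf : Function.Involutive f) (hadj : ∀ z, G.Adj z (f z))
    {u v x : V} (hfu : f u = v) (hxv : x ≠ v) (hux : G.Adj u x) (hvy : G.Adj v (f x)) :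
    ∀ z, G.Adj z (switchFun f v x z) := by
  intro z
  have huv : u ≠ v := by rw [← hfu]; exact (hadj u).ne
  have hfv : f v = u := by rw [← hfu]; exact hf u
  have hxu : x ≠ u := hux.ne'
  have hyx : f x ≠ x := (hadj x).ne'
  have hyv : f x ≠ v := fun h => hxu (by rw [← hf x, h, hfv])
  have hyu : f x ≠ u := fun h => hxv (by rw [← hf x, h, hfu])
  by_cases hzu : z = u
  · rw [hzu, switchFun_apply_u hfu huv hux.ne hxv]
    exact hux
  by_cases hzx : z = x
  · have h2 : switchFun f v x x = u := by
      unfold switchFun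
      rw [Equiv.swap_apply_right, hfv, Equiv.swap_apply_of_ne_of_ne huv (Ne.symm hxu)]
    rw [hzx, h2]
    exact hux.symm
  by_cases hzv : z = v
  · have h2 : switchFun f v x v = f x := by
      unfold switchFun
      rw [Equiv.swap_apply_left, Equiv.swap_apply_of_ne_of_ne hyv hyx]
    rw [hzv, h2]
    exact hvy
  by_cases hzy : z = f x
  · have h2 : switchFun f v x (f x) = v := by
      unfold switchFun
      rw [Equiv.swap_apply_of_ne_of_ne hyv hyx, hf x, Equiv.swap_apply_right]
    rw [hzy, h2]
    exact hvy.symm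
  · have hfz1 : f z ≠ v := fun h => hzu (by rw [← hf z, h, hfv])
    have hfz2 : f z ≠ x := fun h => hzy (by rw [← hf z, h])
    have : switchFun f v x z = f z := by
      unfold switchFun
      rw [Equiv.swap_apply_of_ne_of_ne hzv hzx, Equiv.swap_apply_of_ne_of_ne hfz1 hfz2]
    rw [this]
    exact hadj z

def Phi (G : SimpleGraph V) (u v : V) (p : Σ g : {g : Invol G // g.1 u = v},
    {x : V // x ≠ v ∧ G.Adj u x ∧ G.Adj v (g.1.1 x)}) : Invol G :=
  ⟨switchFun p.1.1.1 v p.2.1,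
   switchFun_involutive p.1.1.2.1 v p.2.1,
   switchFun_adj p.1.1.2.1 p.1.1.2.2 p.1.2 p.2.2.1 p.2.2.2.1 p.2.2.2.2⟩

lemma Phi_injective (G : SimpleGraph V) (u v : V) (huv : G.Adj u v) :
    Function.Injective (Phi G u v) := by
  rintro ⟨⟨⟨f, hfi, hfa⟩, hfu⟩, ⟨x, hxv, hux, hvfx⟩⟩
    ⟨⟨⟨f', hfi', hfa'⟩, hfu'⟩, ⟨x', hxv', hux', hvfx'⟩⟩ h
  have hval : switchFun f v x = switchFun f' v x' := congrArg Subtype.val h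
  have hx : switchFun f v x u = x := switchFun_apply_u hfu huv.ne hux.ne hxv
  have hx' : switchFun f' v x' u = x' := switchFun_apply_u hfu' huv.ne hux'.ne hxv'
  have hxx : x = x' := by rw [← hx, ← hx', hval]
  subst hxx
  have hff : f = f' := by
    have h2 := congrArg (fun g => switchFun g v x) hval
    simpa only [switchFun_switchFun] using h2
  subst hff
  rfl

lemma fib_card (G : SimpleGraph V) (g : Invol G) (u v : V) :
    Fintype.card V ≤ Nat.card {x : V // x ≠ v ∧ G.Adj u x ∧ G.Adj v (g.1 x)} +
      (1 + {x | ¬ G.Adj u x}.ncard + {x | ¬ G.Adj v x}.ncard) := by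
  classical
  have h1 : ({x | ¬ G.Adj v (g.1 x)} : Set V).ncard = ({x | ¬ G.Adj v x} : Set V).ncard := by
    rw [← Nat.card_coe_set_eq, ← Nat.card_coe_set_eq]
    exact Nat.card_congr ((g.2.1.toPerm).subtypeEquiv fun x => Iff.rfl)
  have hsub : (Set.univ : Set V) ⊆ {x | x ≠ v ∧ G.Adj u x ∧ G.Adj v (g.1 x)} ∪
      (({v} : Set V) ∪ {x | ¬ G.Adj u x} ∪ {x | ¬ G.Adj v (g.1 x)}) := by
    intro x _
    by_cases h1 : x = v
    · exact Or.inr (Or.inl (Or.inl h1))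
    by_cases h2 : G.Adj u x
    · by_cases h3 : G.Adj v (g.1 x)
      · exact Or.inl ⟨h1, h2, h3⟩
      · exact Or.inr (Or.inr h3)
    · exact Or.inr (Or.inl (Or.inr h2))
  calc Fintype.card V = (Set.univ : Set V).ncard := by
        rw [Set.ncard_univ, Nat.card_eq_fintype_card]
    _ ≤ ({x | x ≠ v ∧ G.Adj u x ∧ G.Adj v (g.1 x)} ∪
        (({v} : Set V) ∪ {x | ¬ G.Adj u x} ∪ {x | ¬ G.Adj v (g.1 x)})).ncard :=
        Set.ncard_le_ncard hsub (Set.toFinite _)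
    _ ≤ ({x | x ≠ v ∧ G.Adj u x ∧ G.Adj v (g.1 x)} : Set V).ncard +
        (({v} : Set V) ∪ {x | ¬ G.Adj u x} ∪ {x | ¬ G.Adj v (g.1 x)}).ncard :=
        Set.ncard_union_le _ _
    _ ≤ ({x | x ≠ v ∧ G.Adj u x ∧ G.Adj v (g.1 x)} : Set V).ncard +
        ((({v} : Set V) ∪ {x | ¬ G.Adj u x}).ncard + ({x | ¬ G.Adj v (g.1 x)} : Set V).ncard) :=
        Nat.add_le_add_left (Set.ncard_union_le _ _) _
    _ ≤ ({x | x ≠ v ∧ G.Adj u x ∧ G.Adj v (g.1 x)} : Set V).ncard +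
        ((({v} : Set V).ncard + ({x | ¬ G.Adj u x} : Set V).ncard) +
          ({x | ¬ G.Adj v (g.1 x)} : Set V).ncard) := by
        gcongr
        exact Set.ncard_union_le _ _
    _ = Nat.card {x : V // x ≠ v ∧ G.Adj u x ∧ G.Adj v (g.1 x)} +
        (1 + {x | ¬ G.Adj u x}.ncard + {x | ¬ G.Adj v x}.ncard) := by
        have hx : Nat.card {x : V // x ≠ v ∧ G.Adj u x ∧ G.Adj v (g.1 x)}
            = ({x | x ≠ v ∧ G.Adj u x ∧ G.Adj v (g.1 x)} : Set V).ncard :=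
          Nat.card_coe_set_eq _
        rw [h1, Set.ncard_singleton, hx]
        try ring

lemma key (G : SimpleGraph V) (u v : V) (huv : G.Adj u v) :
    Nat.card {g : Invol G // g.1 u = v} * Fintype.card V ≤
      Nat.card (Invol G) + Nat.card {g : Invol G // g.1 u = v} *
        (1 + {x | ¬ G.Adj u x}.ncard + {x | ¬ G.Adj v x}.ncard) := by
  classical
  haveI : Fintype (Invol G) := Fintype.ofFinite _
  set K := 1 + {x | ¬ G.Adj u x}.ncard + {x | ¬ G.Adj v x}.ncard with hK
  have hsig : Nat.card (Σ g : {g : Invol G // g.1 u = v},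
      {x : V // x ≠ v ∧ G.Adj u x ∧ G.Adj v (g.1.1 x)}) ≤ Nat.card (Invol G) :=
    Nat.card_le_card_of_injective _ (Phi_injective G u v huv)
  have hcards : Nat.card {g : Invol G // g.1 u = v} * Fintype.card V ≤
      Nat.card (Σ g : {g : Invol G // g.1 u = v},
        {x : V // x ≠ v ∧ G.Adj u x ∧ G.Adj v (g.1.1 x)}) +
      Nat.card {g : Invol G // g.1 u = v} * K := by
    rw [Nat.card_eq_fintype_card, Nat.card_eq_fintype_card, Fintype.card_sigma]
    have : ∀ g : {g : Invol G // g.1 u = v}, Fintype.card V ≤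
        Fintype.card {x : V // x ≠ v ∧ G.Adj u x ∧ G.Adj v (g.1.1 x)} + K := by
      intro g
      have := fib_card G g.1 u v
      rwa [Nat.card_eq_fintype_card] at this
    calc Fintype.card {g : Invol G // g.1 u = v} * Fintype.card V
        = ∑ _g : {g : Invol G // g.1 u = v}, Fintype.card V := by
          rw [Finset.sum_const, smul_eq_mul, Finset.card_univ]
      _ ≤ ∑ g : {g : Invol G // g.1 u = v},
          (Fintype.card {x : V // x ≠ v ∧ G.Adj u x ∧ G.Adj v (g.1.1 x)} + K) :=
          Finset.sum_le_sum fun g _ => this g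
      _ = (∑ g : {g : Invol G // g.1 u = v},
          Fintype.card {x : V // x ≠ v ∧ G.Adj u x ∧ G.Adj v (g.1.1 x)}) +
          Fintype.card {g : Invol G // g.1 u = v} * K := by
          rw [Finset.sum_add_distrib, Finset.sum_const, smul_eq_mul, Finset.card_univ]
  omega

end PMAux

/-- If `G n` is a sequence of graphs on `2n` vertices with minimum degree `2n - o(n)`,
each containing a perfect matching, and `R n` is a uniformly random perfect matching of
`G n`, then there are a constant `C` and an `N` such that for all `n ≥ N` and every edge
`e` of `G n`, `Pr(e ∈ R n) ≤ C / n` (where `Pr(e ∈ R n)` is the fraction of perfect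
matchings of `G n` containing `e`). -/
theorem statement11 (G : ∀ n : ℕ, SimpleGraph (Fin (2 * n)))
    (t : ℕ → ℕ) (ht : Tendsto (fun n => (t n : ℝ) / (n : ℝ)) atTop (nhds 0))
    (hdeg : ∀ (n : ℕ) (v : Fin (2 * n)), (2 * n : ℝ) - (t n : ℝ) ≤ (((G n).neighborSet v).ncard : ℝ))
    (hpm : ∀ n, ∃ M : (G n).Subgraph, M.IsPerfectMatching) :
    ∃ C : ℝ, ∃ N : ℕ, ∀ n : ℕ, N ≤ n → ∀ e ∈ (G n).edgeSet,
      (Nat.card {P : (G n).Subgraph // P.IsPerfectMatching ∧ e ∈ P.edgeSet} : ℝ)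
          / (pm (G n) : ℝ) ≤ C / (n : ℝ) := by
  classical
  have h4 : ∀ᶠ n in atTop, (t n : ℝ) / (n : ℝ) < 1/4 := by
    have := (tendsto_order.1 ht).2 (1/4) (by norm_num)
    exact this
  obtain ⟨N0, hN0⟩ := Filter.eventually_atTop.mp (h4.and (eventually_ge_atTop 2))
  refine ⟨1, N0, ?_⟩
  intro n hn e he
  obtain ⟨htn, hn2⟩ := hN0 n hn
  have hn0 : (0:ℝ) < n := by positivity
  have htn' : (t n : ℝ) < n / 4 := by
    rw [div_lt_iff₀ hn0] at htn
    linarith [htn]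
  revert he
  induction e using Sym2.ind with
  | _ u v =>
    intro he
    have huv : (G n).Adj u v := (G n).mem_edgeSet.mp he
    -- positivity of pm
    obtain ⟨M, hM⟩ := hpm n
    have hpm0 : 0 < pm (G n) := by
      rw [PMAux.card_pm_eq]
      haveI : Nonempty (PMAux.Invol (G n)) := ⟨PMAux.pmEquiv (G n) ⟨M, hM⟩⟩
      exact Nat.card_pos
    -- the key counting inequality
    have hkey := PMAux.key (G n) u v huv
    rw [← PMAux.card_edge_eq, ← PMAux.card_pm_eq, Fintype.card_fin] at hkey
    set a := Nat.card {P : (G n).Subgraph // P.IsPerfectMatching ∧ s(u,v) ∈ P.edgeSet} with ha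
    -- bound the non-neighbour counts
    have hbound : ∀ w : Fin (2*n), (({x | ¬ (G n).Adj w x} : Set (Fin (2*n))).ncard : ℝ) ≤ t n := by
      intro w
      have hcompl := Set.ncard_add_ncard_compl ((G n).neighborSet w)
      have hcompl' : ((G n).neighborSet w)ᶜ = {x | ¬ (G n).Adj w x} := by
        ext x; simp [SimpleGraph.neighborSet]
      rw [hcompl', Nat.card_eq_fintype_card, Fintype.card_fin] at hcompl
      have hd := hdeg n w
      have : (({x | ¬ (G n).Adj w x} : Set (Fin (2*n))).ncard : ℝ)
          = 2 * n - (((G n).neighborSet w).ncard : ℝ) := by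
        have := congrArg (fun m : ℕ => (m : ℝ)) hcompl
        push_cast at this
        linarith
      rw [this]
      linarith
    -- real versions
    have hkeyR : (a : ℝ) * (2 * n) ≤ (pm (G n) : ℝ) + (a : ℝ) *
        (1 + (({x | ¬ (G n).Adj u x} : Set (Fin (2*n))).ncard : ℝ)
          + (({x | ¬ (G n).Adj v x} : Set (Fin (2*n))).ncard : ℝ)) := by
      have := (Nat.cast_le (α := ℝ)).mpr hkey
      push_cast at this
      linarith
    have ha0 : (0:ℝ) ≤ (a : ℝ) := Nat.cast_nonneg _
    have hKb : (1 : ℝ) + (({x | ¬ (G n).Adj u x} : Set (Fin (2*n))).ncard : ℝ)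
          + (({x | ¬ (G n).Adj v x} : Set (Fin (2*n))).ncard : ℝ) ≤ 1 + n/2 := by
      have h1 := hbound u
      have h2 := hbound v
      linarith
    have hfinal : (a : ℝ) * n ≤ (pm (G n) : ℝ) := by
      have hstep : (a : ℝ) * (2 * n) ≤ (pm (G n) : ℝ) + (a : ℝ) * (1 + n/2) := by
        have := mul_le_mul_of_nonneg_left hKb ha0
        linarith
      have hn2R : (2:ℝ) ≤ n := by exact_mod_cast hn2
      nlinarith
    rw [div_le_div_iff₀ (by exact_mod_cast hpm0) hn0]
    linarith
end

section
/- Fix an integer r ≥ 3 and a constant C > 0. There exists N such that for all n ≥ N the following holds: if v_1, …, v_r are positive integers with |v_i − n| ≤ C log n for all i and v_1 + ⋯ + v_r even, and G is the complete r-partite graph with parts V_1, …, V_r of sizes v_1, …, v_r, then G has a perfect matching P such that for all i < j, the number of edges of P between V_i and V_j lies in the interval [n/(r−1) − √(n log n), n/(r−1) + √(n log n)]. -/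
open SimpleGraph Finset

namespace Stmt13

variable {r : ℕ} (m : Fin r → Fin r → ℕ)

/-- partial sums of row `i` of `m`. -/
def off (i : Fin r) (k : ℕ) : ℕ := ∑ j ∈ Finset.univ.filter (fun j : Fin r => j.val < k), m i j

lemma off_zero (i : Fin r) : off m i 0 = 0 := by simp [off]

lemma off_succ (i : Fin r) {k : ℕ} (hk : k < r) :
    off m i (k + 1) = off m i k + m i ⟨k, hk⟩ := by
  unfold off
  rw [show (Finset.univ.filter (fun j : Fin r => j.val < k + 1)) =
      insert ⟨k, hk⟩ (Finset.univ.filter (fun j : Fin r => j.val < k)) from ?_,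
    Finset.sum_insert (by simp)]
  · ring
  · ext j
    simp only [Finset.mem_insert, Finset.mem_filter, Finset.mem_univ, true_and]
    constructor
    · intro h
      rcases Nat.lt_succ_iff_lt_or_eq.mp h with h | h
      · exact Or.inr h
      · exact Or.inl (Fin.ext h)
    · rintro (rfl | h)
      · exact Nat.lt_succ_self _
      · omega

lemma off_mono (i : Fin r) {k l : ℕ} (h : k ≤ l) : off m i k ≤ off m i l :=
  Finset.sum_le_sum_of_subset (fun j hj => by
    simp only [Finset.mem_filter, Finset.mem_univ, true_and] at *; omega)

lemma off_eq_total (i : Fin r) : off m i r = ∑ j, m i j := by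
  unfold off
  congr 1
  ext j
  simp [j.isLt]

/-- the index of the block containing `x` in row `i`. -/
def J (i : Fin r) (x : ℕ) : ℕ := Nat.findGreatest (fun k => off m i k ≤ x) (r - 1)

lemma J_lt (i : Fin r) (x : ℕ) : J m i x < r :=
  lt_of_le_of_lt (Nat.findGreatest_le _) (by have := i.pos; omega)

lemma off_J_le (i : Fin r) (x : ℕ) : off m i (J m i x) ≤ x :=
  Nat.findGreatest_spec (P := fun k => off m i k ≤ x) (Nat.zero_le _)
    (by show off m i 0 ≤ x; rw [off_zero]; exact Nat.zero_le x)

lemma lt_off_J_succ (i : Fin r) {x : ℕ} (hx : x < ∑ j, m i j) :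
    x < off m i (J m i x + 1) := by
  by_cases h : J m i x = r - 1
  · have h1 : J m i x + 1 = r := by have := i.pos; omega
    rw [h1, off_eq_total]; exact hx
  · have h2 : J m i x + 1 ≤ r - 1 := by
      have h3 : J m i x ≤ r - 1 := Nat.findGreatest_le (P := fun k => off m i k ≤ x) (r - 1)
      omega
    have h4 := Nat.findGreatest_is_greatest (P := fun k => off m i k ≤ x)
      (k := J m i x + 1) (Nat.lt_succ_self _) h2
    simp only [not_le] at h4
    exact h4

lemma J_eq (i : Fin r) {j : Fin r} {x : ℕ} (h1 : off m i j.val ≤ x)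
    (h2 : x < off m i (j.val + 1)) : J m i x = j.val := by
  have hle : j.val ≤ Nat.findGreatest (fun k => off m i k ≤ x) (r - 1) :=
    Nat.le_findGreatest (by have := j.isLt; omega) h1
  by_contra hne
  have hlt : j.val < J m i x := lt_of_le_of_ne hle (fun h => hne h.symm)
  have h5 : off m i (j.val + 1) ≤ off m i (J m i x) := off_mono m i hlt
  have h6 := off_J_le m i x
  omega


/-- block index as an element of `Fin r`. -/
def Jf (i : Fin r) (x : ℕ) : Fin r := ⟨J m i x, J_lt m i x⟩

lemma block_spec (v : Fin r → ℕ) (hv : ∀ i, v i = ∑ j, m i j) (i : Fin r) (x : Fin (v i)) :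
    off m i (Jf m i x.val).val ≤ x.val ∧
      x.val < off m i (Jf m i x.val).val + m i (Jf m i x.val) := by
  have hx : x.val < ∑ j, m i j := by rw [← hv i]; exact x.isLt
  have h1 := off_J_le m i x.val
  have h2 := lt_off_J_succ m i hx
  rw [off_succ m i (J_lt m i x.val)] at h2
  exact ⟨h1, h2⟩

lemma off_add_lt (v : Fin r → ℕ) (hv : ∀ i, v i = ∑ j, m i j)
    (hs : ∀ i j, m i j = m j i) {i j : Fin r} {k : ℕ} (hk : k < m i j) :
    off m j i.val + k < v j := by
  have h1 : off m j (i.val + 1) = off m j i.val + m j i := by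
    rw [off_succ m j i.isLt]
  have h2 : off m j (i.val + 1) ≤ off m j r := off_mono m j (by omega)
  rw [off_eq_total] at h2
  rw [hs i j] at hk
  have := hv j
  omega

/-- the matching as an involution on vertices. -/
def f (v : Fin r → ℕ) (hv : ∀ i, v i = ∑ j, m i j) (hs : ∀ i j, m i j = m j i)
    (a : Σ i, Fin (v i)) : Σ i, Fin (v i) :=
  ⟨Jf m a.1 a.2.val,
    ⟨off m (Jf m a.1 a.2.val) a.1.val + (a.2.val - off m a.1 (Jf m a.1 a.2.val).val),
      by
        have h := block_spec m v hv a.1 a.2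
        exact off_add_lt m v hv hs (i := a.1) (j := Jf m a.1 a.2.val) (by omega)⟩⟩

lemma f_apply (v : Fin r → ℕ) (hv : ∀ i, v i = ∑ j, m i j) (hs : ∀ i j, m i j = m j i)
    {i j : Fin r} (y : Fin (v i)) {k : ℕ} (hk : k < m i j)
    (hy : y.val = off m i j.val + k) :
    f m v hv hs ⟨i, y⟩ = ⟨j, ⟨off m j i.val + k, off_add_lt m v hv hs hk⟩⟩ := by
  have hJ : J m i y.val = j.val := by
    apply J_eq
    · omega
    · rw [off_succ m i j.isLt]
      simp only [Fin.eta]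
      omega
  have hfst : (Jf m i y.val) = j := Fin.ext hJ
  apply Sigma.ext
  · exact hfst
  · refine (Fin.heq_ext_iff (congrArg v hfst)).mpr ?_
    show off m (Jf m i y.val) i.val + (y.val - off m i (Jf m i y.val).val) = off m j i.val + k
    rw [hfst]
    omega

lemma f_invol (v : Fin r → ℕ) (hv : ∀ i, v i = ∑ j, m i j) (hs : ∀ i j, m i j = m j i)
    (a : Σ i, Fin (v i)) : f m v hv hs (f m v hv hs a) = a := by
  obtain ⟨i, x⟩ := a
  obtain ⟨h1, h2⟩ := block_spec m v hv i x
  have hk : x.val - off m i (Jf m i x.val).val < m i (Jf m i x.val) := by omega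
  have hx : x.val = off m i (Jf m i x.val).val + (x.val - off m i (Jf m i x.val).val) := by omega
  rw [f_apply m v hv hs x hk hx]
  rw [f_apply m v hv hs _ (by rw [← hs i (Jf m i x.val)]; exact hk) rfl]
  apply Sigma.ext
  · rfl
  · rw [Fin.heq_ext_iff rfl]
    show off m i (Jf m i x.val).val + (x.val - off m i (Jf m i x.val).val) = x.val
    omega

lemma f_fst (v : Fin r → ℕ) (hv : ∀ i, v i = ∑ j, m i j) (hs : ∀ i j, m i j = m j i)
    (a : Σ i, Fin (v i)) : (f m v hv hs a).1 = Jf m a.1 a.2.val := rfl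

lemma f_fst_ne (v : Fin r → ℕ) (hv : ∀ i, v i = ∑ j, m i j) (hs : ∀ i j, m i j = m j i)
    (hd : ∀ i, m i i = 0) (a : Σ i, Fin (v i)) : (f m v hv hs a).1 ≠ a.1 := by
  obtain ⟨i, x⟩ := a
  obtain ⟨h1, h2⟩ := block_spec m v hv i x
  intro h
  have h3 : Jf m i x.val = i := h
  rw [h3, hd i] at h2
  rw [h3] at h1
  omega


lemma count_aux (v : Fin r → ℕ) (hv : ∀ i, v i = ∑ j, m i j) (hs : ∀ i j, m i j = m j i)
    (i j : Fin r) :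
    {x : Fin (v i) | (f m v hv hs ⟨i, x⟩).1 = j} =
      {x : Fin (v i) | off m i j.val ≤ x.val ∧ x.val < off m i j.val + m i j} := by
  ext x
  simp only [Set.mem_setOf_eq]
  constructor
  · intro h
    have hb := block_spec m v hv i x
    rw [f_fst] at h
    rw [← h]
    exact hb
  · rintro ⟨h1, h2⟩
    have := f_apply m v hv hs (j := j) x (k := x.val - off m i j.val) (by omega) (by omega)
    rw [this]

lemma ncard_interval (N a c : ℕ) (h : a + c ≤ N) :
    {x : Fin N | a ≤ x.val ∧ x.val < a + c}.ncard = c := by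
  classical
  have he : {x : Fin N | a ≤ x.val ∧ x.val < a + c} =
      ↑((Finset.Ico a (a + c)).attachFin (n := N)
        (fun y hy => by rw [Finset.mem_Ico] at hy; omega)) := by
    ext x
    simp [Finset.mem_attachFin, Finset.mem_Ico]
  rw [he, Set.ncard_coe_finset, Finset.card_attachFin, Nat.card_Ico]
  omega

lemma generic {r : ℕ} (m : Fin r → Fin r → ℕ) (hs : ∀ i j, m i j = m j i)
    (hd : ∀ i, m i i = 0) (v : Fin r → ℕ) (hv : ∀ i, v i = ∑ j, m i j) :
    ∃ P : (completeMultipartiteGraph (fun i => Fin (v i))).Subgraph,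
      P.IsPerfectMatching ∧
      ∀ i j : Fin r,
        ({x : Σ i', Fin (v i') | x.1 = i ∧ ∃ y, P.Adj x y ∧ y.1 = j}).ncard = m i j := by
  classical
  refine ⟨{ verts := Set.univ
            Adj := fun a b => b = f m v hv hs a
            adj_sub := ?_
            edge_vert := fun _ => Set.mem_univ _
            symm := ?_ }, ⟨fun a _ => ⟨f m v hv hs a, rfl, fun y hy => hy⟩,
              fun _ => Set.mem_univ _⟩, ?_⟩
  · rintro a b rfl
    simp only [comap_adj, top_adj]
    exact (f_fst_ne m v hv hs hd a).symm
  · constructor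
    rintro a b rfl
    exact (f_invol m v hv hs a).symm
  · intro i j
    have hset : {x : Σ i', Fin (v i') | x.1 = i ∧ ∃ y, (y = f m v hv hs x) ∧ y.1 = j} =
        Sigma.mk i '' {y : Fin (v i) | (f m v hv hs ⟨i, y⟩).1 = j} := by
      ext x
      obtain ⟨i', x'⟩ := x
      simp only [Set.mem_setOf_eq, Set.mem_image, exists_eq_left]
      constructor
      · rintro ⟨rfl, h⟩
        exact ⟨x', h, rfl⟩
      · rintro ⟨y, hy, hxy⟩
        cases hxy
        exact ⟨rfl, hy⟩
    show Set.ncard {x : Σ i', Fin (v i') | x.1 = i ∧ ∃ y, (y = f m v hv hs x) ∧ y.1 = j} = m i j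
    rw [hset, Set.ncard_image_of_injective _ sigma_mk_injective,
      count_aux m v hv hs i j]
    apply ncard_interval
    have h1 : off m i (j.val + 1) = off m i j.val + m i j := by
      have := off_succ m i j.isLt
      simpa using this
    have h2 : off m i (j.val + 1) ≤ off m i r := off_mono m i (by omega)
    rw [off_eq_total, ← hv i] at h2
    omega


section Adjust

variable {r : ℕ} (i0 i1 i2 : Fin r) (d : Fin r → ℤ) (y : ℤ)

/-- the adjustment matrix. -/
def Ea : Fin r → Fin r → ℤ := fun i j =>
  if i = j then 0
  else if (i = i0 ∧ j = i1) ∨ (i = i1 ∧ j = i0) then d i1 - y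
  else if (i = i0 ∧ j = i2) ∨ (i = i2 ∧ j = i0) then d i2 - y
  else if i = i0 then d j
  else if j = i0 then d i
  else if (i = i1 ∧ j = i2) ∨ (i = i2 ∧ j = i1) then y
  else 0

variable (h01 : i0 ≠ i1) (h02 : i0 ≠ i2) (h12 : i1 ≠ i2)

lemma Ea_symm (i j : Fin r) : Ea i0 i1 i2 d y i j = Ea i0 i1 i2 d y j i := by
  unfold Ea
  split_ifs <;> simp_all [eq_comm] <;> tauto

lemma Ea_diag (i : Fin r) : Ea i0 i1 i2 d y i i = 0 := by
  unfold Ea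
  simp

include h01 h02 h12 in
lemma Ea_row (hS : ∑ i, d i = 2 * y + 2 * d i0) (i : Fin r) :
    ∑ j, Ea i0 i1 i2 d y i j = d i := by
  classical
  by_cases hI0 : i = i0
  · rw [hI0]
    have hpt : ∀ j, Ea i0 i1 i2 d y i0 j =
        d j + ((if j = i0 then -d i0 else 0) + (if j = i1 then -y else 0) +
          (if j = i2 then -y else 0)) := by
      intro j
      unfold Ea
      split_ifs <;> subst_vars <;>
        first
          | contradiction
          | ring1
          | (rcases ‹_ ∨ _› with ⟨h', h''⟩ | ⟨h', h''⟩ <;> subst_vars <;>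
              first | contradiction | ring1)
          | simp_all
    rw [Finset.sum_congr rfl (fun j _ => hpt j)]
    rw [Finset.sum_add_distrib, Finset.sum_add_distrib, Finset.sum_add_distrib]
    rw [Finset.sum_ite_eq' Finset.univ i0, Finset.sum_ite_eq' Finset.univ i1,
      Finset.sum_ite_eq' Finset.univ i2]
    simp only [Finset.mem_univ, if_true]
    rw [hS]
    ring
  · by_cases hI1 : i = i1
    · rw [hI1]
      have hpt : ∀ j, Ea i0 i1 i2 d y i1 j =
          (if j = i0 then d i1 - y else 0) + (if j = i2 then y else 0) := by
        intro j
        unfold Ea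
        split_ifs <;> subst_vars <;>
        first
          | contradiction
          | ring1
          | (rcases ‹_ ∨ _› with ⟨h', h''⟩ | ⟨h', h''⟩ <;> subst_vars <;>
              first | contradiction | ring1)
          | simp_all
      rw [Finset.sum_congr rfl (fun j _ => hpt j)]
      rw [Finset.sum_add_distrib, Finset.sum_ite_eq' Finset.univ i0,
        Finset.sum_ite_eq' Finset.univ i2]
      simp
    · by_cases hI2 : i = i2
      · rw [hI2]
        have hpt : ∀ j, Ea i0 i1 i2 d y i2 j =
            (if j = i0 then d i2 - y else 0) + (if j = i1 then y else 0) := by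
          intro j
          unfold Ea
          split_ifs <;> subst_vars <;>
        first
          | contradiction
          | ring1
          | (rcases ‹_ ∨ _› with ⟨h', h''⟩ | ⟨h', h''⟩ <;> subst_vars <;>
              first | contradiction | ring1)
          | simp_all
        rw [Finset.sum_congr rfl (fun j _ => hpt j)]
        rw [Finset.sum_add_distrib, Finset.sum_ite_eq' Finset.univ i0,
          Finset.sum_ite_eq' Finset.univ i1]
        simp
      · have hpt : ∀ j, Ea i0 i1 i2 d y i j = (if j = i0 then d i else 0) := by
          intro j
          unfold Ea
          split_ifs <;> subst_vars <;>
        first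
          | contradiction
          | ring1
          | (rcases ‹_ ∨ _› with ⟨h', h''⟩ | ⟨h', h''⟩ <;> subst_vars <;>
              first | contradiction | ring1)
          | simp_all
        rw [Finset.sum_congr rfl (fun j _ => hpt j)]
        rw [Finset.sum_ite_eq' Finset.univ i0]
        simp

end Adjust

end Stmt13

set_option maxHeartbeats 2000000 in
/-- Fix `r ≥ 3` and `C > 0`.  There is an `N` such that for all `n ≥ N`: if
`v 1, …, v r` are positive integers with `|v i - n| ≤ C log n` and even sum, then the
complete `r`-partite graph with parts of sizes `v 1, …, v r` has a perfect matching `P`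
such that for all `i < j` the number of edges of `P` between `V i` and `V j` lies in
`[n/(r-1) - √(n log n), n/(r-1) + √(n log n)]`. -/
theorem statement13 (r : ℕ) (hr : 3 ≤ r) (C : ℝ) (hC : 0 < C) :
    ∃ N : ℕ, ∀ n : ℕ, N ≤ n → ∀ v : Fin r → ℕ,
      (∀ i, 0 < v i) → (∀ i, |(v i : ℝ) - (n : ℝ)| ≤ C * Real.log n) →
      Even (∑ i, v i) →
      ∃ P : (completeMultipartiteGraph (fun i => Fin (v i))).Subgraph,
        P.IsPerfectMatching ∧
        ∀ i j : Fin r, i < j →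
          (n : ℝ) / ((r : ℝ) - 1) - Real.sqrt ((n : ℝ) * Real.log n) ≤
              (({x : Σ i', Fin (v i') | x.1 = i ∧ ∃ y, P.Adj x y ∧ y.1 = j}).ncard : ℝ) ∧
            (({x : Σ i', Fin (v i') | x.1 = i ∧ ∃ y, P.Adj x y ∧ y.1 = j}).ncard : ℝ) ≤
              (n : ℝ) / ((r : ℝ) - 1) + Real.sqrt ((n : ℝ) * Real.log n) := by
  classical
  have hrR : (3:ℝ) ≤ (r:ℝ) := by exact_mod_cast hr
  -- the eventual analytic condition
  have hev : ∀ᶠ x : ℝ in Filter.atTop,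
      ((r:ℝ)+1) * (C * Real.log x + r) + 1 ≤ Real.sqrt x ∧
      Real.sqrt x ≤ x / r ∧ 1 ≤ Real.log x := by
    have hlo : Real.log =o[Filter.atTop] fun x : ℝ => x ^ ((1:ℝ)/2) :=
      isLittleO_log_rpow_atTop (by norm_num)
    have hb := hlo.bound (c := 1 / (2 * (((r:ℝ)+1) * C))) (by positivity)
    have hlog := Real.tendsto_log_atTop.eventually_ge_atTop 1
    have hK : ∀ᶠ x : ℝ in Filter.atTop,
        (2*(((r:ℝ)+1)*(r:ℝ)+2) + (r:ℝ))^2 ≤ x := Filter.eventually_ge_atTop _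
    have h0 : ∀ᶠ x : ℝ in Filter.atTop, (0:ℝ) ≤ x := Filter.eventually_ge_atTop 0
    filter_upwards [hb, hlog, hK, h0] with x hx hlx hKx h0x
    have hsx : x ^ ((1:ℝ)/2) = Real.sqrt x := (Real.sqrt_eq_rpow x).symm
    rw [Real.norm_eq_abs, Real.norm_eq_abs, hsx, abs_of_nonneg (by linarith),
      abs_of_nonneg (Real.sqrt_nonneg x)] at hx
    have hKs : 2*(((r:ℝ)+1)*(r:ℝ)+2) + (r:ℝ) ≤ Real.sqrt x := by
      rw [show (2*(((r:ℝ)+1)*(r:ℝ)+2) + (r:ℝ)) = |2*(((r:ℝ)+1)*(r:ℝ)+2) + (r:ℝ)| from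
        (abs_of_nonneg (by positivity)).symm]
      exact Real.abs_le_sqrt hKx
    have h5 : ((r:ℝ)+1)*C*Real.log x ≤ Real.sqrt x / 2 := by
      calc ((r:ℝ)+1)*C*Real.log x
          ≤ ((r:ℝ)+1)*C*(1 / (2 * (((r:ℝ)+1) * C)) * Real.sqrt x) := by
            apply mul_le_mul_of_nonneg_left hx (by positivity)
        _ = Real.sqrt x / 2 := by
            field_simp
    refine ⟨by nlinarith [Real.sqrt_nonneg x], ?_, hlx⟩
    · rw [le_div_iff₀ (by linarith : (0:ℝ) < (r:ℝ))]
      have := Real.mul_self_sqrt h0x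
      nlinarith [Real.sqrt_nonneg x]
  obtain ⟨N, hN⟩ := Filter.eventually_atTop.mp (tendsto_natCast_atTop_atTop.eventually hev)
  refine ⟨N, ?_⟩
  intro n hn v hvpos hvclose hvsum
  obtain ⟨hc1, hc2, hc3⟩ := hN n hn
  -- basic setup
  set t : ℕ := n / (r - 1) with ht
  set i0 : Fin r := ⟨0, by omega⟩ with hi0
  set i1 : Fin r := ⟨1, by omega⟩ with hi1
  set i2 : Fin r := ⟨2, by omega⟩ with hi2
  have h01 : i0 ≠ i1 := by rw [hi0, hi1]; simp [Fin.ext_iff]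
  have h02 : i0 ≠ i2 := by rw [hi0, hi2]; simp [Fin.ext_iff]
  have h12 : i1 ≠ i2 := by rw [hi1, hi2]; simp [Fin.ext_iff]
  set d : Fin r → ℤ := fun i => (v i : ℤ) - ((r : ℤ) - 1) * t with hd
  -- parity
  have hSeven : Even (∑ i, d i) := by
    have h1 : ∑ i, d i = (∑ i, (v i : ℤ)) - (r : ℤ) * (((r:ℤ) - 1) * t) := by
      rw [hd, Finset.sum_sub_distrib, Finset.sum_const, Finset.card_univ,
        Fintype.card_fin, nsmul_eq_mul]
    rw [h1, Int.even_sub]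
    constructor
    · intro _
      have h2 : Even (((r:ℤ) - 1) * r) := by
        have := Int.even_mul_succ_self ((r:ℤ) - 1)
        simpa using this
      have h3 : Even ((r : ℤ) * (((r:ℤ) - 1) * t)) := by
        have := h2.mul_right t
        convert this using 1
        ring
      exact h3
    · intro _
      have hcast : Even ((∑ i, v i : ℕ) : ℤ) := (Int.even_coe_nat _).mpr hvsum
      rw [Nat.cast_sum] at hcast
      exact hcast
  obtain ⟨sh, hsh⟩ := hSeven
  set y : ℤ := sh - d i0 with hy
  have hS : ∑ i, d i = 2 * y + 2 * d i0 := by rw [hy]; omega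
  -- division facts
  have hr1 : 0 < r - 1 := by omega
  have hdm : (r - 1) * t + n % (r - 1) = n := by rw [ht]; exact Nat.div_add_mod n (r - 1)
  have hml := Nat.mod_lt n hr1
  have htn1 : (r - 1) * t ≤ n := by omega
  have htn2 : n < (r - 1) * t + (r - 1) := by omega
  have hcast1 : (((r - 1 : ℕ)) : ℝ) = (r : ℝ) - 1 := by
    have : (1:ℕ) ≤ r := by omega
    push_cast [this]
    ring
  have htn1R : ((r:ℝ) - 1) * t ≤ n := by
    have : (((r-1) * t : ℕ) : ℝ) ≤ (n:ℝ) := Nat.cast_le.mpr htn1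
    push_cast at this
    rw [← hcast1]
    push_cast
    linarith
  have htn2R : (n:ℝ) < ((r:ℝ) - 1) * t + ((r:ℝ) - 1) := by
    have : (n:ℝ) < (((r-1) * t + (r-1) : ℕ) : ℝ) := Nat.cast_lt.mpr htn2
    push_cast [show (1:ℕ) ≤ r by omega] at this
    linarith
  -- bounds on d, y, Ea
  have hlogpos : (0:ℝ) ≤ Real.log n := by linarith
  set D : ℝ := C * Real.log n + r with hD
  have hDpos : (0:ℝ) ≤ D := by
    rw [hD]
    have : (0:ℝ) ≤ C * Real.log n := mul_nonneg hC.le hlogpos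
    have : (0:ℝ) ≤ (r:ℝ) := Nat.cast_nonneg r
    linarith [mul_nonneg hC.le hlogpos]
  have hdb : ∀ i, |((d i : ℤ) : ℝ)| ≤ D := by
    intro i
    rw [hd]
    simp only
    push_cast
    have h1 := abs_le.mp (hvclose i)
    rw [abs_le]
    constructor
    · simp only [neg_le, hD]
      nlinarith [h1.1, h1.2, htn1R, htn2R]
    · rw [hD]
      nlinarith [h1.1, h1.2, htn1R, htn2R]
  have hSb : |((∑ i, d i : ℤ) : ℝ)| ≤ (r:ℝ) * D := by
    push_cast
    calc |∑ i, ((d i : ℤ) : ℝ)| ≤ ∑ i, |((d i : ℤ) : ℝ)| :=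
          Finset.abs_sum_le_sum_abs _ _
      _ ≤ ∑ _i : Fin r, D := Finset.sum_le_sum (fun i _ => hdb i)
      _ = (r:ℝ) * D := by
          rw [Finset.sum_const, Finset.card_univ, Fintype.card_fin, nsmul_eq_mul]
  have hyb : |((y : ℤ) : ℝ)| ≤ (r:ℝ) * D := by
    have h2 : ((sh:ℤ):ℝ) + ((sh:ℤ):ℝ) = ((∑ i, d i : ℤ) : ℝ) := by
      exact_mod_cast congrArg (fun z : ℤ => (z:ℝ)) hsh.symm
    have h3 := abs_le.mp hSb
    have h4 := abs_le.mp (hdb i0)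
    rw [hy]
    push_cast
    rw [abs_le]
    constructor <;> nlinarith [hrR, hDpos]
  have hEb : ∀ i j, |((Stmt13.Ea i0 i1 i2 d y i j : ℤ) : ℝ)| ≤ ((r:ℝ) + 1) * D := by
    intro i j
    have hj := abs_le.mp (hdb j)
    have hi := abs_le.mp (hdb i)
    have hb1 := abs_le.mp (hdb i1)
    have hb2 := abs_le.mp (hdb i2)
    have hyy := abs_le.mp hyb
    unfold Stmt13.Ea
    split_ifs <;> push_cast <;> rw [abs_le] <;> constructor <;> nlinarith [hrR, hDpos]
  -- entries are nonnegative
  have hZ : ∀ i j, i ≠ j → 0 ≤ (t:ℤ) + Stmt13.Ea i0 i1 i2 d y i j := by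
    intro i j hij
    have key : (0:ℝ) ≤ (t:ℝ) + ((Stmt13.Ea i0 i1 i2 d y i j : ℤ) : ℝ) := by
      have hE := abs_le.mp (hEb i j)
      have h6 : (n:ℝ)/(r:ℝ) - 1 ≤ (t:ℝ) := by
        rw [sub_le_iff_le_add, div_le_iff₀ (by linarith : (0:ℝ) < (r:ℝ))]
        nlinarith [htn2R, Nat.cast_nonneg (α := ℝ) t]
      nlinarith [hc1, hc2, hE.1]
    exact_mod_cast key
  -- the matrix of counts
  set M : Fin r → Fin r → ℕ :=
    fun i j => (if i = j then 0 else (t : ℤ) + Stmt13.Ea i0 i1 i2 d y i j).toNat with hM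
  have hMQ : ∀ i j, ((M i j : ℕ) : ℤ) =
      if i = j then 0 else (t:ℤ) + Stmt13.Ea i0 i1 i2 d y i j := by
    intro i j
    rw [hM]
    simp only
    split_ifs with h
    · simp
    · exact Int.toNat_of_nonneg (hZ i j h)
  have hsym : ∀ i j, M i j = M j i := by
    intro i j
    rw [hM]
    simp only
    rw [Stmt13.Ea_symm i0 i1 i2 d y i j]
    by_cases h : i = j
    · rw [if_pos h, if_pos h.symm]
    · rw [if_neg h, if_neg (Ne.symm h)]
  have hdiag : ∀ i, M i i = 0 := by
    intro i
    rw [hM]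
    simp
  have hrow : ∀ i, v i = ∑ j, M i j := by
    intro i
    have h2 : ∑ j, ((M i j : ℕ) : ℤ) =
        (∑ j, ((t:ℤ) + Stmt13.Ea i0 i1 i2 d y i j)) -
          ∑ j, (if i = j then (t:ℤ) else 0) := by
      rw [← Finset.sum_sub_distrib]
      apply Finset.sum_congr rfl
      intro j _
      rw [hMQ i j]
      by_cases h : i = j
      · rw [if_pos h, if_pos h, ← h, Stmt13.Ea_diag]
        ring
      · rw [if_neg h, if_neg h]
        ring
    have h3 : ∑ j, ((t:ℤ) + Stmt13.Ea i0 i1 i2 d y i j) = (r:ℤ) * t + d i := by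
      rw [Finset.sum_add_distrib, Stmt13.Ea_row i0 i1 i2 d y h01 h02 h12 hS i,
        Finset.sum_const, Finset.card_univ, Fintype.card_fin, nsmul_eq_mul]
    have h4 : ∑ j, (if i = j then (t:ℤ) else 0) = t := by
      rw [Finset.sum_ite_eq]
      simp
    have h5 : ((∑ j, M i j : ℕ) : ℤ) = (v i : ℤ) := by
      push_cast
      rw [h2, h3, h4, hd]
      simp only
      ring
    exact (Nat.cast_inj.mp h5).symm
  obtain ⟨P, hPm, hPc⟩ := Stmt13.generic M hsym hdiag v hrow
  refine ⟨P, hPm, ?_⟩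
  intro i j hij
  rw [hPc i j]
  have hij' : i ≠ j := ne_of_lt hij
  have hMr : ((M i j : ℕ) : ℝ) = (t:ℝ) + ((Stmt13.Ea i0 i1 i2 d y i j : ℤ) : ℝ) := by
    have h7 := hMQ i j
    rw [if_neg hij'] at h7
    exact_mod_cast congrArg (fun z : ℤ => (z:ℝ)) h7
  have hE := abs_le.mp (hEb i j)
  have hrpos : (0:ℝ) < (r:ℝ) - 1 := by linarith
  have htle : (t:ℝ) ≤ (n:ℝ)/((r:ℝ)-1) := by
    rw [le_div_iff₀ hrpos]
    nlinarith [htn1R]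
  have htge : (n:ℝ)/((r:ℝ)-1) ≤ (t:ℝ) + 1 := by
    rw [div_le_iff₀ hrpos]
    nlinarith [htn2R]
  have hsq : Real.sqrt n ≤ Real.sqrt ((n:ℝ) * Real.log n) := by
    apply Real.sqrt_le_sqrt
    nlinarith [Nat.cast_nonneg (α := ℝ) n, hc3]
  rw [hMr]
  constructor
  · nlinarith [hc1, hE.1, hsq]
  · nlinarith [hc1, hE.2, hsq]
end

section
/- Fix an integer r ≥ 3 and a constant C > 0. There exists N such that for all n ≥ N the following holds. Let v_1, …, v_r be positive integers with |v_i − n| ≤ C log n and v_1 + ⋯ + v_r even; let 𝒫 be the set of integer vectors v = (v_{i,j})_{i<j, i,j∈[r]} satisfying v_{i,j} ≥ 0 for all i<j and Σ_{j≠i} v_{i,j} = v_i for all i (where v_{i,j} := v_{j,i} when i > j). Let c = ⌊n/(r−1)⌋ and d = ⌊√(n log n)⌋, and for each integer vector u = (u_{i,j})_{i<j} let 𝒫_u be the set of v ∈ 𝒫 with c + 2u_{i,j}d − d < v_{i,j} ≤ c + 2u_{i,j}d + d for all i<j, and let 𝒞 be the union of 𝒫_u over all u with max_{i<j}|u_{i,j}|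 ≤ 1. Then for every integer vector u, |𝒫_u| ≤ |𝒞|. -/
/-- Integer vectors indexed by the unordered pairs `{i, j} ⊆ [r]`, encoded as symmetric
`r × r` integer matrices with zero diagonal. -/
def PairVec (r : ℕ) : Set (Fin r → Fin r → ℤ) :=
  {w | (∀ i j, w i j = w j i) ∧ ∀ i, w i i = 0}

/-- The set `𝒫` of vectors `(v_{i,j})_{i<j}` satisfying the constraints (PM) for the part
sizes `vparts`: `v_{i,j} ≥ 0` for all `i ≠ j` and `∑_{j ≠ i} v_{i,j} = vparts i` for all
`i` (the diagonal entries of the encoding are `0`, so the sum may be taken over all `j`). -/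
def PMvec {r : ℕ} (vparts : Fin r → ℕ) : Set (Fin r → Fin r → ℤ) :=
  {w ∈ PairVec r | (∀ i j, i ≠ j → 0 ≤ w i j) ∧ ∀ i, ∑ j, w i j = (vparts i : ℤ)}

/-- The set `𝒫_u`: the members `v` of `𝒫` with
`c + 2 u_{i,j} d - d < v_{i,j} ≤ c + 2 u_{i,j} d + d` for all `i < j`. -/
def PMcell {r : ℕ} (vparts : Fin r → ℕ) (c d : ℤ) (u : Fin r → Fin r → ℤ) :
    Set (Fin r → Fin r → ℤ) :=
  {w ∈ PMvec vparts | ∀ i j, i < j →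
    c + 2 * u i j * d - d < w i j ∧ w i j ≤ c + 2 * u i j * d + d}

/-- The set `𝒞`: the union of the `𝒫_u` over all `u` with `|u|_∞ ≤ 1`. -/
def PMcenter {r : ℕ} (vparts : Fin r → ℕ) (c d : ℤ) : Set (Fin r → Fin r → ℤ) :=
  ⋃ u ∈ {u : Fin r → Fin r → ℤ | u ∈ PairVec r ∧ ∀ i j, |u i j| ≤ 1},
    PMcell vparts c d u

def etaF {r : ℕ} (a b cc : Fin r) (ρ : Fin r → ℤ) (t e : ℤ) : Fin r → Fin r → ℤ :=
  fun i j =>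
    if i = j then 0
    else if (i = a ∧ j = b) ∨ (i = b ∧ j = a) then e
    else if (i = a ∧ j = cc) ∨ (i = cc ∧ j = a) then ρ cc - t
    else if (i = b ∧ j = cc) ∨ (i = cc ∧ j = b) then t
    else if i = a then ρ j
    else if j = a then ρ i
    else 0

lemma etaF_diag {r : ℕ} (a b cc : Fin r) (ρ : Fin r → ℤ) (t e : ℤ) (i : Fin r) :
    etaF a b cc ρ t e i i = 0 := by simp [etaF]

lemma etaF_symm {r : ℕ} (a b cc : Fin r) (ρ : Fin r → ℤ) (t e : ℤ) (i j : Fin r) :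
    etaF a b cc ρ t e i j = etaF a b cc ρ t e j i := by
  rcases eq_or_ne i j with rfl | hij
  · rfl
  unfold etaF
  rw [if_neg hij, if_neg (Ne.symm hij)]
  by_cases h1 : (i = a ∧ j = b) ∨ (i = b ∧ j = a)
  · rw [if_pos h1, if_pos (by tauto : (j = a ∧ i = b) ∨ (j = b ∧ i = a))]
  · rw [if_neg h1, if_neg (by tauto : ¬((j = a ∧ i = b) ∨ (j = b ∧ i = a)))]
    by_cases h2 : (i = a ∧ j = cc) ∨ (i = cc ∧ j = a)
    · rw [if_pos h2, if_pos (by tauto : (j = a ∧ i = cc) ∨ (j = cc ∧ i = a))]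
    · rw [if_neg h2, if_neg (by tauto : ¬((j = a ∧ i = cc) ∨ (j = cc ∧ i = a)))]
      by_cases h3 : (i = b ∧ j = cc) ∨ (i = cc ∧ j = b)
      · rw [if_pos h3, if_pos (by tauto : (j = b ∧ i = cc) ∨ (j = cc ∧ i = b))]
      · rw [if_neg h3, if_neg (by tauto : ¬((j = b ∧ i = cc) ∨ (j = cc ∧ i = b)))]
        by_cases h4 : i = a
        · have h5 : j ≠ a := fun h => hij (by rw [h4, h])
          rw [if_pos h4, if_neg h5, if_pos h4]
        · by_cases h5 : j = a
          · rw [if_neg h4, if_pos h5, if_pos h5]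
          · simp only [if_neg h4, if_neg h5]

set_option maxHeartbeats 1600000 in
lemma etaF_rowsum {r : ℕ} (a b cc : Fin r) (ρ : Fin r → ℤ) (t e : ℤ)
    (hab : a ≠ b) (hac : a ≠ cc) (hbc : b ≠ cc)
    (he : e = ρ b - t) (hT : ∑ i, ρ i = 2 * t + 2 * ρ a) (i : Fin r) :
    ∑ j, etaF a b cc ρ t e i j = ρ i := by
  by_cases hia : i = a
  · subst hia
    have hpt : ∀ j, etaF i b cc ρ t e i j
        = ρ j + ((if j = i then -ρ i else 0) + ((if j = b then e - ρ b else 0)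
          + (if j = cc then -t else 0))) := by
      intro j
      unfold etaF
      split_ifs <;> first | (subst_vars; omega) | tauto
    rw [Finset.sum_congr rfl fun j _ => hpt j, Finset.sum_add_distrib,
      Finset.sum_add_distrib, Finset.sum_add_distrib,
      Fintype.sum_ite_eq' i (fun _ => -ρ i), Fintype.sum_ite_eq' b (fun _ => e - ρ b),
      Fintype.sum_ite_eq' cc (fun _ => -t)]
    omega
  · by_cases hib : i = b
    · subst hib
      have hpt : ∀ j, etaF a i cc ρ t e i j
          = (if j = a then e else 0) + (if j = cc then t else 0) := by
        intro j
        unfold etaF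
        split_ifs <;> first | (subst_vars; omega) | tauto
      rw [Finset.sum_congr rfl fun j _ => hpt j, Finset.sum_add_distrib,
        Fintype.sum_ite_eq' a (fun _ => e), Fintype.sum_ite_eq' cc (fun _ => t)]
      omega
    · by_cases hic : i = cc
      · subst hic
        have hpt : ∀ j, etaF a b i ρ t e i j
            = (if j = a then ρ i - t else 0) + (if j = b then t else 0) := by
          intro j
          unfold etaF
          split_ifs <;> first | (subst_vars; omega) | tauto
        rw [Finset.sum_congr rfl fun j _ => hpt j, Finset.sum_add_distrib,
          Fintype.sum_ite_eq' a (fun _ => ρ i - t), Fintype.sum_ite_eq' b (fun _ => t)]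
        omega
      · have hpt : ∀ j, etaF a b cc ρ t e i j = (if j = a then ρ i else 0) := by
          intro j
          unfold etaF
          split_ifs <;> first | (subst_vars; omega) | tauto
        rw [Finset.sum_congr rfl fun j _ => hpt j, Fintype.sum_ite_eq' a (fun _ => ρ i)]

lemma etaF_bound {r : ℕ} (a b cc : Fin r) (ρ : Fin r → ℤ) (t e : ℤ) (K K' : ℝ)
    (hρ : ∀ i, |((ρ i : ℤ) : ℝ)| ≤ K) (ht : |(t : ℝ)| ≤ K') (he : e = ρ b - t)
    (i j : Fin r) : |((etaF a b cc ρ t e i j : ℤ) : ℝ)| ≤ K + K' := by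
  have h0K : 0 ≤ K := le_trans (abs_nonneg _) (hρ a)
  have h0K' : 0 ≤ K' := le_trans (abs_nonneg _) ht
  have hi := abs_le.mp (hρ i)
  have hj := abs_le.mp (hρ j)
  have hc := abs_le.mp (hρ cc)
  have hb := abs_le.mp (hρ b)
  have ht' := abs_le.mp ht
  have heR : (e : ℝ) = ((ρ b : ℤ) : ℝ) - (t : ℝ) := by exact_mod_cast he
  unfold etaF
  split_ifs <;> rw [abs_le] <;> push_cast <;> constructor <;> linarith

set_option maxHeartbeats 1600000 in
/-- Fix `r ≥ 3` and `C > 0`.  There is an `N` such that for all `n ≥ N`: if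
`v 1, …, v r` are positive integers with `|v i - n| ≤ C log n` and even sum, then with
`c = ⌊n/(r-1)⌋` and `d = ⌊√(n log n)⌋` we have `|𝒫_u| ≤ |𝒞|` for every integer vector
`u`. -/
theorem statement14 (r : ℕ) (hr : 3 ≤ r) (C : ℝ) (hC : 0 < C) :
    ∃ N : ℕ, ∀ n : ℕ, N ≤ n → ∀ vparts : Fin r → ℕ,
      (∀ i, 0 < vparts i) → (∀ i, |(vparts i : ℝ) - (n : ℝ)| ≤ C * Real.log n) →
      Even (∑ i, vparts i) →
      ∀ u : Fin r → Fin r → ℤ, u ∈ PairVec r →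
        (PMcell vparts ((n / (r - 1) : ℕ) : ℤ) ⌊Real.sqrt ((n : ℝ) * Real.log n)⌋ u).ncard ≤
          (PMcenter vparts ((n / (r - 1) : ℕ) : ℤ) ⌊Real.sqrt ((n : ℝ) * Real.log n)⌋).ncard := by
  set A : ℝ := ((r : ℝ) + 4) * (C + (r : ℝ)) with hAdef
  set Q : ℝ := (r : ℝ) - 1 with hQdef
  have hrR : (3 : ℝ) ≤ (r : ℝ) := by exact_mod_cast hr
  have hQ2 : (2 : ℝ) ≤ Q := by rw [hQdef]; linarith
  have hQ0 : (0 : ℝ) < Q := by linarith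
  have hA0 : 0 ≤ A := by rw [hAdef]; positivity
  clear_value A Q
  obtain ⟨N, hN⟩ := exists_nat_ge (max 3 (max (4 * (A + 2) ^ 4) (1024 * Q ^ 4)))
  refine ⟨N, ?_⟩
  intro n hn vparts hpos hclose heven u hu
  have hnR : (max 3 (max (4 * (A + 2) ^ 4) (1024 * Q ^ 4)) : ℝ) ≤ (n : ℝ) :=
    le_trans hN (by exact_mod_cast hn)
  have hn3 : (3 : ℝ) ≤ (n : ℝ) := le_trans (le_max_left _ _) hnR
  have hn4A : 4 * (A + 2) ^ 4 ≤ (n : ℝ) :=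
    le_trans (le_trans (le_max_left _ _) (le_max_right _ _)) hnR
  have hn1024 : 1024 * Q ^ 4 ≤ (n : ℝ) :=
    le_trans (le_trans (le_max_right _ _) (le_max_right _ _)) hnR
  have hn0 : (0 : ℝ) < (n : ℝ) := by linarith
  -- basic log/sqrt facts
  have hlog1 : 1 ≤ Real.log n := by
    rw [Real.le_log_iff_exp_le hn0]
    have := Real.exp_one_lt_d9
    linarith
  have hlog0 : 0 ≤ Real.log n := by linarith
  have hsqn : Real.sqrt n * Real.sqrt n = (n : ℝ) := Real.mul_self_sqrt hn0.le
  have hsqn0 : 0 ≤ Real.sqrt n := Real.sqrt_nonneg _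
  have hlog2 : Real.log n ≤ 2 * Real.sqrt n := by
    have h1 : Real.log (Real.sqrt n) ≤ Real.sqrt n - 1 :=
      Real.log_le_sub_one_of_pos (Real.sqrt_pos.mpr hn0)
    have h2 : Real.log (Real.sqrt n) = Real.log n / 2 := Real.log_sqrt hn0.le
    linarith
  have hsplit : Real.sqrt ((n : ℝ) * Real.log n)
      = Real.sqrt n * Real.sqrt (Real.log n) := Real.sqrt_mul hn0.le _
  have hslog : Real.sqrt (Real.log n) * Real.sqrt (Real.log n) = Real.log n :=
    Real.mul_self_sqrt hlog0
  have hslog0 : 0 ≤ Real.sqrt (Real.log n) := Real.sqrt_nonneg _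
  have hsA : 2 * (A + 2) ^ 2 ≤ Real.sqrt n := by
    have h1 : Real.sqrt (4 * (A + 2) ^ 4) ≤ Real.sqrt n := Real.sqrt_le_sqrt hn4A
    have h2 : Real.sqrt (4 * (A + 2) ^ 4) = 2 * (A + 2) ^ 2 := by
      rw [show 4 * (A + 2) ^ 4 = (2 * (A + 2) ^ 2) ^ 2 by ring]
      exact Real.sqrt_sq (by positivity)
    linarith
  have key1 : (A + 2) * Real.sqrt (Real.log n) ≤ Real.sqrt n := by
    have h1 : (A + 2) * Real.sqrt (Real.log n) = Real.sqrt ((A + 2) ^ 2 * Real.log n) := by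
      rw [Real.sqrt_mul (by positivity), Real.sqrt_sq (by positivity)]
    have h2 : (A + 2) ^ 2 * Real.log n ≤ (n : ℝ) := by nlinarith
    rw [h1]
    exact Real.sqrt_le_sqrt h2
  have hR1 : A * Real.log n + 2 ≤ Real.sqrt ((n : ℝ) * Real.log n) := by
    have h1 : A * Real.log n + 2 ≤ (A + 2) * Real.log n := by nlinarith
    have h2 : (A + 2) * Real.log n
        = ((A + 2) * Real.sqrt (Real.log n)) * Real.sqrt (Real.log n) := by
      rw [mul_assoc, hslog]
    have h3 : ((A + 2) * Real.sqrt (Real.log n)) * Real.sqrt (Real.log n)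
        ≤ Real.sqrt n * Real.sqrt (Real.log n) :=
      mul_le_mul_of_nonneg_right key1 hslog0
    rw [hsplit]
    linarith
  have hsQ : 32 * Q ^ 2 ≤ Real.sqrt n := by
    have h1 : Real.sqrt (1024 * Q ^ 4) ≤ Real.sqrt n := Real.sqrt_le_sqrt hn1024
    have h2 : Real.sqrt (1024 * Q ^ 4) = 32 * Q ^ 2 := by
      rw [show 1024 * Q ^ 4 = (32 * Q ^ 2) ^ 2 by ring]
      exact Real.sqrt_sq (by positivity)
    linarith
  have hsltn : Real.sqrt ((n : ℝ) * Real.log n) ≤ (n : ℝ) / (4 * Q) := by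
    have h2 : (n : ℝ) * Real.log n ≤ (n : ℝ) * (2 * Real.sqrt n) := by nlinarith
    have h3 : (n : ℝ) * (2 * Real.sqrt n) * (16 * Q ^ 2) ≤ (n : ℝ) * (n : ℝ) := by
      have h4 : 32 * Q ^ 2 * Real.sqrt n ≤ Real.sqrt n * Real.sqrt n :=
        mul_le_mul_of_nonneg_right hsQ hsqn0
      nlinarith
    have h5 : ((n : ℝ) / (4 * Q)) ^ 2 = (n : ℝ) * (n : ℝ) / (16 * Q ^ 2) := by
      field_simp
      ring
    have h6 : (n : ℝ) * Real.log n * (16 * Q ^ 2) ≤ (n : ℝ) * (2 * Real.sqrt n) * (16 * Q ^ 2) :=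
      mul_le_mul_of_nonneg_right h2 (by positivity)
    have h1 : (n : ℝ) * Real.log n ≤ ((n : ℝ) / (4 * Q)) ^ 2 := by
      rw [h5, le_div_iff₀ (by positivity)]
      linarith
    calc Real.sqrt ((n : ℝ) * Real.log n) ≤ Real.sqrt (((n : ℝ) / (4 * Q)) ^ 2) :=
          Real.sqrt_le_sqrt h1
      _ = (n : ℝ) / (4 * Q) := Real.sqrt_sq (by positivity)
  have hR2 : 3 * Real.sqrt ((n : ℝ) * Real.log n) + 1 ≤ (n : ℝ) / Q := by
    have h1 : 1 ≤ (n : ℝ) / (4 * Q) := by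
      rw [le_div_iff₀ (by positivity)]
      nlinarith
    have h2 : (n : ℝ) / Q = 4 * ((n : ℝ) / (4 * Q)) := by
      field_simp
    rw [h2]
    linarith
  -- the integer quantities
  set dZ := (⌊Real.sqrt ((n : ℝ) * Real.log n)⌋ : ℤ) with hdZdef
  set cZ := ((n / (r - 1) : ℕ) : ℤ) with hcZdef
  have hdle : (dZ : ℝ) ≤ Real.sqrt ((n : ℝ) * Real.log n) := Int.floor_le _
  have hdgt : Real.sqrt ((n : ℝ) * Real.log n) < (dZ : ℝ) + 1 :=
    Int.lt_floor_add_one _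
  have hd1 : 1 ≤ dZ := by
    have h1 : (1 : ℝ) ≤ Real.sqrt ((n : ℝ) * Real.log n) := by nlinarith
    exact Int.le_floor.mpr (by exact_mod_cast h1)
  have hAd : A * Real.log n ≤ (dZ : ℝ) - 1 := by linarith
  have hr1pos : 0 < r - 1 := by omega
  have hmlt : n % (r - 1) < r - 1 := Nat.mod_lt _ hr1pos
  have hdm := Nat.div_add_mod n (r - 1)
  set mZ := ((n % (r - 1) : ℕ) : ℤ) with hmZdef
  have hmZ0 : 0 ≤ mZ := by positivity
  have hmZle : mZ ≤ (r : ℤ) - 2 := by omega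
  have hceq : ((r : ℤ) - 1) * cZ + mZ = (n : ℤ) := by
    have h1 : ((r - 1 : ℕ) : ℤ) = (r : ℤ) - 1 := by omega
    rw [hcZdef, hmZdef, ← h1]
    exact_mod_cast hdm
  have hceqR : Q * (cZ : ℝ) = (n : ℝ) - (mZ : ℝ) := by
    have := hceq
    have h2 : ((r : ℝ) - 1) * (cZ : ℝ) + (mZ : ℝ) = (n : ℝ) := by exact_mod_cast this
    rw [hQdef]
    linarith
  have hcR : (n : ℝ) / Q - 1 ≤ (cZ : ℝ) := by
    have hmR : (mZ : ℝ) ≤ Q := by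
      have : (mZ : ℝ) ≤ (r : ℝ) - 2 := by exact_mod_cast hmZle
      linarith
    have h1 : (n : ℝ) - Q ≤ Q * (cZ : ℝ) := by rw [hceqR]; linarith
    have h2 : (n : ℝ) / Q - 1 = ((n : ℝ) - Q) / Q := by field_simp
    rw [h2, div_le_iff₀ hQ0]
    linarith [h1, mul_comm Q (cZ : ℝ)]
  have hc3d : 3 * dZ ≤ cZ := by
    have h1 : 3 * (dZ : ℝ) ≤ (cZ : ℝ) := by linarith
    exact_mod_cast h1
  clear_value dZ cZ mZ
  -- residuals
  set ρf := (fun i => (vparts i : ℤ) - ((r : ℤ) - 1) * cZ : Fin r → ℤ) with hρdef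
  set K := (C * Real.log n + (r : ℝ) : ℝ) with hKdef
  have hK0 : 0 ≤ K := by rw [hKdef]; positivity
  clear_value K
  have hρabs : ∀ i, |((ρf i : ℤ) : ℝ)| ≤ K := by
    intro i
    have h1 := abs_le.mp (hclose i)
    have h2 : ρf i = ((vparts i : ℤ) - (n : ℤ)) + mZ := by
      simp only [hρdef]
      omega
    have h3 : ((ρf i : ℤ) : ℝ) = ((vparts i : ℝ) - (n : ℝ)) + (mZ : ℝ) := by
      rw [h2]; push_cast; ring
    have hmR : (mZ : ℝ) ≤ (r : ℝ) - 2 := by exact_mod_cast hmZle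
    have hmR0 : (0 : ℝ) ≤ (mZ : ℝ) := by exact_mod_cast hmZ0
    have hClog : 0 ≤ C * Real.log n := mul_nonneg hC.le hlog0
    rw [abs_le, h3, hKdef]
    constructor <;> linarith
  clear_value ρf
  set T := (∑ i, ρf i : ℤ) with hTdef
  clear_value T
  have hTabs : |(T : ℝ)| ≤ (r : ℝ) * K := by
    have h1 : (T : ℝ) = ∑ i, ((ρf i : ℤ) : ℝ) := by rw [hTdef]; push_cast; rfl
    rw [h1]
    calc |∑ i, ((ρf i : ℤ) : ℝ)| ≤ ∑ i, |((ρf i : ℤ) : ℝ)| :=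
          Finset.abs_sum_le_sum_abs _ _
      _ ≤ (Finset.univ.card : ℕ) • K := Finset.sum_le_card_nsmul _ _ K fun i _ => hρabs i
      _ = (r : ℝ) * K := by
          rw [Finset.card_univ, Fintype.card_fin, nsmul_eq_mul]
  have hTeven : Even T := by
    have h1 : T = (∑ i, (vparts i : ℤ)) - (r : ℤ) * (((r : ℤ) - 1) * cZ) := by
      simp only [hTdef, hρdef]
      rw [Finset.sum_sub_distrib, Finset.sum_const, Finset.card_univ,
        Fintype.card_fin, nsmul_eq_mul]
    rw [h1]
    apply Even.sub
    · have h2 : (∑ i, (vparts i : ℤ)) = ((∑ i, vparts i : ℕ) : ℤ) := by push_cast; rfl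
      rw [h2]
      exact (Int.even_coe_nat _).mpr heven
    · have h2 : Even ((r : ℤ) * ((r : ℤ) - 1)) := by
        have h3 := Int.even_mul_succ_self ((r : ℤ) - 1)
        rwa [show (r : ℤ) - 1 + 1 = (r : ℤ) by ring, mul_comm] at h3
      rw [show (r : ℤ) * (((r : ℤ) - 1) * cZ) = ((r : ℤ) * ((r : ℤ) - 1)) * cZ by ring]
      exact h2.mul_right cZ
  obtain ⟨k, hk⟩ := hTeven
  set ia := (⟨0, by omega⟩ : Fin r) with hiadef
  set ib := (⟨1, by omega⟩ : Fin r) with hibdef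
  set ic := (⟨2, by omega⟩ : Fin r) with hicdef
  clear_value ia ib ic
  have hab : ia ≠ ib := by simp [hiadef, hibdef, Fin.ext_iff]
  have hac : ia ≠ ic := by simp [hiadef, hicdef, Fin.ext_iff]
  have hbc : ib ≠ ic := by simp [hibdef, hicdef, Fin.ext_iff]
  set tZ := (k - ρf ia : ℤ) with htZdef
  set eZ := (ρf ib - tZ : ℤ) with heZdef
  clear_value tZ eZ
  have hT2 : T = 2 * tZ + 2 * ρf ia := by omega
  have hkabs : |(k : ℝ)| ≤ (r : ℝ) * K / 2 := by
    have h1 : (T : ℝ) = (k : ℝ) + (k : ℝ) := by exact_mod_cast hk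
    have h2 : |(k : ℝ)| * 2 = |(T : ℝ)| := by
      rw [h1, show (k : ℝ) + (k : ℝ) = (k : ℝ) * 2 by ring, abs_mul]
      norm_num
    linarith [hTabs]
  have htabs : |(tZ : ℝ)| ≤ (r : ℝ) * K / 2 + K := by
    have h1 : (tZ : ℝ) = (k : ℝ) - ((ρf ia : ℤ) : ℝ) := by rw [htZdef]; push_cast; ring
    have h2 := abs_le.mp (hρabs ia)
    have h3 := abs_le.mp hkabs
    rw [abs_le, h1]
    constructor <;> linarith [h2.1, h2.2, h3.1, h3.2]
  set ηf := (etaF ia ib ic ρf tZ eZ : Fin r → Fin r → ℤ) with hηdef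
  have hηR : ∀ i j, |((ηf i j : ℤ) : ℝ)| ≤ K + ((r : ℝ) * K / 2 + K) := fun i j =>
    etaF_bound ia ib ic ρf tZ eZ K ((r : ℝ) * K / 2 + K) hρabs htabs heZdef i j
  have hKA : K + ((r : ℝ) * K / 2 + K) ≤ A * Real.log n := by
    have h1 : K ≤ (C + (r : ℝ)) * Real.log n := by
      rw [hKdef]
      nlinarith
    have h2 : 0 ≤ C + (r : ℝ) := by linarith
    rw [hAdef]
    nlinarith
  have hηd : ∀ i j, -(dZ - 1) ≤ ηf i j ∧ ηf i j ≤ dZ - 1 := by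
    intro i j
    have h1 := hηR i j
    have h3 : |((ηf i j : ℤ) : ℝ)| ≤ ((dZ - 1 : ℤ) : ℝ) := by push_cast; linarith
    have h4 : |ηf i j| ≤ dZ - 1 := by
      rw [← Int.cast_abs] at h3
      exact_mod_cast h3
    exact abs_le.mp h4
  -- the central target vector
  set w := (fun i j => if i = j then 0 else cZ + ηf i j : Fin r → Fin r → ℤ) with hwdef
  have hwsym : ∀ i j, w i j = w j i := by
    intro i j
    rcases eq_or_ne i j with rfl | hij
    · rfl
    · simp only [hwdef]
      rw [if_neg hij, if_neg (Ne.symm hij), hηdef, etaF_symm]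
  have hwdiag : ∀ i, w i i = 0 := by intro i; simp only [hwdef]; simp
  have hwrow : ∀ i, ∑ j, w i j = (vparts i : ℤ) := by
    intro i
    have hpt : ∀ j, w i j = (cZ - (if i = j then cZ else 0)) + ηf i j := by
      intro j
      rcases eq_or_ne i j with rfl | h
      · simp only [hwdef]
        simp [hηdef, etaF_diag]
      · simp only [hwdef]
        simp [h]
    rw [Finset.sum_congr rfl fun j _ => hpt j, Finset.sum_add_distrib,
      Finset.sum_sub_distrib, Finset.sum_const, Finset.card_univ, Fintype.card_fin,
      nsmul_eq_mul, Fintype.sum_ite_eq i (fun _ => cZ), hηdef,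
      etaF_rowsum ia ib ic ρf tZ eZ hab hac hbc heZdef (by rw [← hTdef]; exact hT2) i,
      hρdef]
    ring
  have hwbound : ∀ i j, i ≠ j → cZ - dZ + 1 ≤ w i j ∧ w i j ≤ cZ + dZ - 1 := by
    intro i j h
    simp only [hwdef]
    rw [if_neg h]
    have := hηd i j
    omega
  -- main case split
  rcases Set.eq_empty_or_nonempty
      (PMcell vparts cZ dZ u) with hemp | ⟨vstar, hvstar⟩
  · rw [hemp]
    simp
  obtain ⟨⟨⟨hsymS, hdiagS⟩, hnnS, hrowS⟩, hboxS⟩ := hvstar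
  -- bounds on translated vectors
  have hφboxlt : ∀ v ∈ PMcell vparts cZ dZ u, ∀ i j : Fin r, i < j →
      cZ - 3 * dZ + 2 ≤ v i j - vstar i j + w i j ∧
        v i j - vstar i j + w i j ≤ cZ + 3 * dZ - 2 := by
    intro v hv i j hij
    obtain ⟨⟨⟨hsv, hdv⟩, hnv, hrv⟩, hbv⟩ := hv
    have h1 := hbv i j hij
    have h2 := hboxS i j hij
    have h3 := hwbound i j (ne_of_lt hij)
    constructor <;> linarith [h1.1, h1.2, h2.1, h2.2, h3.1, h3.2]
  have hφbox : ∀ v ∈ PMcell vparts cZ dZ u, ∀ i j : Fin r, i ≠ j →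
      cZ - 3 * dZ + 2 ≤ v i j - vstar i j + w i j ∧
        v i j - vstar i j + w i j ≤ cZ + 3 * dZ - 2 := by
    intro v hv i j hij
    rcases hij.lt_or_gt with h | h
    · exact hφboxlt v hv i j h
    · have h4 := hφboxlt v hv j i h
      obtain ⟨⟨⟨hsv, hdv⟩, hnv, hrv⟩, hbv⟩ := hv
      rw [hsv i j, hsymS i j, hwsym i j]
      exact h4
  -- the injection maps into the center
  have hmaps : ∀ v ∈ PMcell vparts cZ dZ u,
      (fun i j => v i j - vstar i j + w i j) ∈ PMcenter vparts cZ dZ := by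
    intro v hv
    have hvmem := hv
    obtain ⟨⟨⟨hsv, hdv⟩, hnv, hrv⟩, hbv⟩ := hvmem
    set x := (fun i j => v i j - vstar i j + w i j : Fin r → Fin r → ℤ) with hxdef
    have hxsym : ∀ i j, x i j = x j i := by
      intro i j
      simp only [hxdef]
      rw [hsv i j, hsymS i j, hwsym i j]
    have hxdiag : ∀ i, x i i = 0 := by
      intro i
      simp only [hxdef]
      rw [hdv i, hdiagS i, hwdiag i]
      ring
    have hxrow : ∀ i, ∑ j, x i j = (vparts i : ℤ) := by
      intro i
      simp only [hxdef]
      rw [Finset.sum_add_distrib, Finset.sum_sub_distrib, hrv i, hrowS i, hwrow i]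
      ring
    have hxbox : ∀ i j, i ≠ j → cZ - 3 * dZ + 2 ≤ x i j ∧ x i j ≤ cZ + 3 * dZ - 2 :=
      fun i j hij => hφbox v hv i j hij
    have hxnn : ∀ i j, i ≠ j → 0 ≤ x i j := by
      intro i j hij
      have := (hxbox i j hij).1
      omega
    set u' := (fun i j =>
      if i = j then 0
      else if x i j ≤ cZ - dZ then -1
      else if x i j ≤ cZ + dZ then 0
      else 1 : Fin r → Fin r → ℤ) with hu'def
    have hu'sym : ∀ i j, u' i j = u' j i := by
      intro i j
      rcases eq_or_ne i j with rfl | hij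
      · rfl
      · simp only [hu'def]
        rw [if_neg hij, if_neg (Ne.symm hij), hxsym i j]
    have hu'diag : ∀ i, u' i i = 0 := by intro i; simp only [hu'def]; simp
    have hu'bnd : ∀ i j, |u' i j| ≤ 1 := by
      intro i j
      simp only [hu'def]
      split_ifs <;> simp
    have hxcell : x ∈ PMcell vparts cZ dZ u' := by
      refine ⟨⟨⟨hxsym, hxdiag⟩, hxnn, hxrow⟩, ?_⟩
      intro i j hij
      have hne : i ≠ j := ne_of_lt hij
      have hb := hxbox i j hne
      simp only [hu'def]
      rw [if_neg hne]
      split_ifs with h1 h2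
      · constructor <;> omega
      · constructor <;> omega
      · constructor <;> omega
    exact Set.mem_iUnion₂.mpr ⟨u', ⟨⟨hu'sym, hu'diag⟩, hu'bnd⟩, hxcell⟩
  -- injectivity
  have hinj : Set.InjOn (fun v (i j : Fin r) => v i j - vstar i j + w i j)
      (PMcell vparts cZ dZ u) := by
    intro v1 _ v2 _ heq
    funext i j
    have h1 := congrFun (congrFun heq i) j
    simp only at h1
    omega
  -- finiteness of the center
  have hfin : (PMcenter vparts cZ dZ).Finite := by
    apply Set.Finite.subset
      (Set.Finite.pi fun _ : Fin r => Set.Finite.pi fun _ : Fin r =>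
        Set.finite_Icc (0 : ℤ) (cZ + 3 * dZ))
    intro x hx
    obtain ⟨u', hu', hxcell⟩ := Set.mem_iUnion₂.mp hx
    obtain ⟨⟨⟨hxs, hxd⟩, hxn, hxr⟩, hxb⟩ := hxcell
    have hupper : ∀ i j, i < j → x i j ≤ cZ + 3 * dZ := by
      intro i j hij
      have h1 := (hxb i j hij).2
      have h2 := abs_le.mp (hu'.2 i j)
      have h3 : u' i j * dZ ≤ 1 * dZ := mul_le_mul_of_nonneg_right h2.2 (by omega)
      nlinarith [h1, h3]
    have hmem : ∀ i j, x i j ∈ Set.Icc (0 : ℤ) (cZ + 3 * dZ) := by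
      intro i j
      rw [Set.mem_Icc]
      rcases lt_trichotomy i j with h | h | h
      · exact ⟨hxn i j (ne_of_lt h), hupper i j h⟩
      · subst h
        rw [hxd i]
        constructor <;> omega
      · rw [hxs i j]
        exact ⟨hxn j i (ne_of_lt h), hupper j i h⟩
    rw [Set.mem_pi]
    intro i _
    rw [Set.mem_pi]
    intro j _
    exact hmem i j
  exact Set.ncard_le_ncard_of_injOn _ hmaps hinj hfin
end

section
/- Let x_1 ≥ … ≥ x_t ≥ 0 and y_1 ≥ … ≥ y_t ≥ 0 be non-negative integers with Σ_{i=1}^t x_i = Σ_{i=1}^t y_i = S. Let c = ⌊S/t⌋, let k ≥ 0 satisfy |x_i − c| ≤ k for all i ∈ [t] and c > k, and let δ ≥ 1 be an integer such that y_1 ≥ c + 2δ. Then ∏_{i=1}^t x_i!/y_i! ≤ exp(−δ(δ−1)/(c+δ) + 2k²t/(c−k)). -/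
open Finset Real

lemma aux_fac_upper (m k : ℕ) : ∀ d : ℕ, d ≤ k → (m + d).factorial ≤ m.factorial * (m + k) ^ d := by
  intro d
  induction d with
  | zero => intro _; simp
  | succ n ih =>
    intro h
    have h1 := ih (Nat.le_of_succ_le h)
    have he : (m + (n+1)).factorial = (m + n + 1) * (m + n).factorial := by
      rw [show m + (n+1) = (m+n)+1 by ring, Nat.factorial_succ]
    rw [he, pow_succ]
    calc (m+n+1) * (m+n).factorial ≤ (m+k) * (m.factorial * (m+k)^n) :=
        Nat.mul_le_mul (by omega) h1
      _ = m.factorial * ((m+k)^n * (m+k)) := by ring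

lemma aux_fac_lower (m b : ℕ) (hb : b ≤ m + 1) : ∀ d : ℕ, m.factorial * b ^ d ≤ (m + d).factorial := by
  intro d
  induction d with
  | zero => simp
  | succ n ih =>
    have he : (m + (n+1)).factorial = (m + n + 1) * (m + n).factorial := by
      rw [show m + (n+1) = (m+n)+1 by ring, Nat.factorial_succ]
    rw [he, pow_succ]
    calc m.factorial * (b^n * b) = b * (m.factorial * b^n) := by ring
      _ ≤ (m+n+1) * (m+n).factorial := Nat.mul_le_mul (by omega) ih

lemma aux_exp_div_le (a b : ℝ) (ha : 0 < a) (hb : 0 ≤ b) :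
    a * Real.exp (b/(a+b)) ≤ a + b := by
  have hab : 0 < a + b := by linarith
  have h2 : a / (a+b) ≤ Real.exp (-(b/(a+b))) := by
    have he : -(b/(a+b)) + 1 = a/(a+b) := by field_simp; ring
    linarith [Real.add_one_le_exp (-(b/(a+b)))]
  have h3 : a / (a+b) ≤ 1 / Real.exp (b/(a+b)) := by
    rwa [Real.exp_neg, ← one_div] at h2
  rw [div_le_div_iff₀ hab (Real.exp_pos _)] at h3
  linarith


lemma aux_U (m c k : ℕ) (hk : |(m:ℤ) - c| ≤ k) (hck : k < c) :
    ((m.factorial : ℝ)) * (c:ℝ)^c ≤ (c.factorial : ℝ) * (c:ℝ)^m * Real.exp ((k:ℝ)^2/((c:ℝ)-k)) := by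
  have hcn : 0 < c := Nat.pos_of_ne_zero (by omega)
  have hc0 : (0:ℝ) < c := by exact_mod_cast hcn
  have hckR : (0:ℝ) < (c:ℝ) - k := by
    have : (k:ℝ) < c := by exact_mod_cast hck
    linarith
  have hkR : (0:ℝ) ≤ k := by positivity
  have hEpos := Real.exp_pos ((k:ℝ)^2/((c:ℝ)-k))
  rcases le_or_gt c m with hcm | hmc
  · -- m ≥ c, d = m - c ≤ k
    set d := m - c with hd
    have hmd : m = c + d := by omega
    have hdk : d ≤ k := by
      rw [abs_le] at hk; omega
    have hnat : m.factorial ≤ c.factorial * (c + k) ^ d := by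
      rw [hmd]; exact aux_fac_upper c k d hdk
    have hnatR : (m.factorial : ℝ) ≤ (c.factorial : ℝ) * ((c:ℝ) + k) ^ d := by
      exact_mod_cast hnat
    -- (c+k)^d ≤ c^d * exp(k²/(c-k))
    have h1 : (c:ℝ) + k = c * (1 + k/c) := by field_simp
    have h2 : (1 + (k:ℝ)/c) ≤ Real.exp ((k:ℝ)/c) := by
      linarith [Real.add_one_le_exp ((k:ℝ)/c)]
    have h3 : ((c:ℝ) + k)^d ≤ (c:ℝ)^d * Real.exp ((d:ℝ) * ((k:ℝ)/c)) := by
      rw [h1, mul_pow, Real.exp_nat_mul]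
      gcongr
    have h4 : (d:ℝ) * ((k:ℝ)/c) ≤ (k:ℝ)^2/((c:ℝ)-k) := by
      have hd' : (d:ℝ) ≤ k := by exact_mod_cast hdk
      have : (k:ℝ)/c ≤ (k:ℝ)/((c:ℝ)-k) := by
        apply div_le_div_of_nonneg_left hkR hckR; linarith
      calc (d:ℝ) * ((k:ℝ)/c) ≤ (k:ℝ) * ((k:ℝ)/((c:ℝ)-k)) := by
            apply mul_le_mul hd' this (by positivity) hkR
        _ = (k:ℝ)^2/((c:ℝ)-k) := by ring
    have h5 : ((c:ℝ)+k)^d ≤ (c:ℝ)^d * Real.exp ((k:ℝ)^2/((c:ℝ)-k)) := by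
      calc ((c:ℝ)+k)^d ≤ (c:ℝ)^d * Real.exp ((d:ℝ) * ((k:ℝ)/c)) := h3
        _ ≤ (c:ℝ)^d * Real.exp ((k:ℝ)^2/((c:ℝ)-k)) :=
            mul_le_mul_of_nonneg_left (Real.exp_le_exp.mpr h4) (by positivity)
    calc (m.factorial : ℝ) * (c:ℝ)^c ≤ ((c.factorial : ℝ) * ((c:ℝ)+k)^d) * (c:ℝ)^c := by
          apply mul_le_mul_of_nonneg_right hnatR (by positivity)
      _ ≤ ((c.factorial : ℝ) * ((c:ℝ)^d * Real.exp ((k:ℝ)^2/((c:ℝ)-k)))) * (c:ℝ)^c := by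
          apply mul_le_mul_of_nonneg_right _ (by positivity)
          apply mul_le_mul_of_nonneg_left h5 (by positivity)
      _ = (c.factorial : ℝ) * ((c:ℝ)^d * (c:ℝ)^c) * Real.exp ((k:ℝ)^2/((c:ℝ)-k)) := by ring
      _ = (c.factorial : ℝ) * (c:ℝ)^m * Real.exp ((k:ℝ)^2/((c:ℝ)-k)) := by
          have hpow : (c:ℝ)^d * (c:ℝ)^c = (c:ℝ)^m := by
            rw [← pow_add]; congr 1; omega
          rw [hpow]
  · -- m < c, d = c - m ≤ k
    set d := c - m with hd
    have hcd : c = m + d := by omega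
    have hdk : d ≤ k := by rw [abs_le] at hk; omega
    have hbm : c - k ≤ m + 1 := by omega
    have hnat : m.factorial * (c - k) ^ d ≤ c.factorial := by
      have := aux_fac_lower m (c - k) hbm d
      rwa [← hcd] at this
    have hnatR : (m.factorial : ℝ) * ((c:ℝ) - k) ^ d ≤ (c.factorial : ℝ) := by
      have : ((c - k : ℕ) : ℝ) = (c:ℝ) - k := by
        push_cast [Nat.cast_sub hck.le]; ring
      calc (m.factorial : ℝ) * ((c:ℝ) - k) ^ d = ((m.factorial * (c-k)^d : ℕ) : ℝ) := by
            push_cast [this]; ring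
        _ ≤ (c.factorial : ℝ) := by exact_mod_cast hnat
    -- c^d ≤ (c-k)^d * exp(k²/(c-k))
    have h1 : (c:ℝ) = ((c:ℝ) - k) * (1 + k/((c:ℝ)-k)) := by field_simp; ring
    have h2 : (1 + (k:ℝ)/((c:ℝ)-k)) ≤ Real.exp ((k:ℝ)/((c:ℝ)-k)) := by
      linarith [Real.add_one_le_exp ((k:ℝ)/((c:ℝ)-k))]
    have h3 : (c:ℝ)^d ≤ ((c:ℝ)-k)^d * Real.exp ((d:ℝ) * ((k:ℝ)/((c:ℝ)-k))) := by
      conv_lhs => rw [h1]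
      rw [mul_pow, Real.exp_nat_mul]
      gcongr
    have h4 : (d:ℝ) * ((k:ℝ)/((c:ℝ)-k)) ≤ (k:ℝ)^2/((c:ℝ)-k) := by
      have hd' : (d:ℝ) ≤ k := by exact_mod_cast hdk
      have hnn : (0:ℝ) ≤ (k:ℝ)/((c:ℝ)-k) := by positivity
      calc (d:ℝ) * ((k:ℝ)/((c:ℝ)-k)) ≤ (k:ℝ) * ((k:ℝ)/((c:ℝ)-k)) :=
            mul_le_mul_of_nonneg_right hd' hnn
        _ = (k:ℝ)^2/((c:ℝ)-k) := by ring
    have h5 : (c:ℝ)^d ≤ ((c:ℝ)-k)^d * Real.exp ((k:ℝ)^2/((c:ℝ)-k)) := by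
      calc (c:ℝ)^d ≤ ((c:ℝ)-k)^d * Real.exp ((d:ℝ) * ((k:ℝ)/((c:ℝ)-k))) := h3
        _ ≤ ((c:ℝ)-k)^d * Real.exp ((k:ℝ)^2/((c:ℝ)-k)) :=
            mul_le_mul_of_nonneg_left (Real.exp_le_exp.mpr h4) (by positivity)
    calc (m.factorial : ℝ) * (c:ℝ)^c = (m.factorial : ℝ) * ((c:ℝ)^m * (c:ℝ)^d) := by
          have hpow : (c:ℝ)^m * (c:ℝ)^d = (c:ℝ)^c := by
            rw [← pow_add]; congr 1; omega
          rw [hpow]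
      _ ≤ (m.factorial : ℝ) * ((c:ℝ)^m * (((c:ℝ)-k)^d * Real.exp ((k:ℝ)^2/((c:ℝ)-k)))) := by
          apply mul_le_mul_of_nonneg_left _ (by positivity)
          apply mul_le_mul_of_nonneg_left h5 (by positivity)
      _ = ((m.factorial : ℝ) * ((c:ℝ)-k)^d) * (c:ℝ)^m * Real.exp ((k:ℝ)^2/((c:ℝ)-k)) := by ring
      _ ≤ (c.factorial : ℝ) * (c:ℝ)^m * Real.exp ((k:ℝ)^2/((c:ℝ)-k)) := by
          apply mul_le_mul_of_nonneg_right _ hEpos.le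
          apply mul_le_mul_of_nonneg_right hnatR (by positivity)

lemma aux_L (m c : ℕ) : (c.factorial : ℝ) * (c:ℝ)^m ≤ (m.factorial : ℝ) * (c:ℝ)^c := by
  rcases le_or_gt c m with hcm | hmc
  · have hnat : c.factorial * c ^ (m - c) ≤ m.factorial := by
      have := aux_fac_lower c c (Nat.le_succ c) (m - c)
      rwa [show c + (m - c) = m by omega] at this
    have : c.factorial * c ^ (m - c) * c ^ c ≤ m.factorial * c ^ c :=
      Nat.mul_le_mul_right _ hnat
    have h2 : c.factorial * c ^ m ≤ m.factorial * c ^ c := by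
      rwa [mul_assoc, ← pow_add, show m - c + c = m by omega] at this
    exact_mod_cast h2
  · have hnat : c.factorial ≤ m.factorial * c ^ (c - m) := by
      have h := aux_fac_upper m (c - m) (c - m) (le_refl _)
      rwa [show m + (c - m) = c by omega] at h
    have : c.factorial * c ^ m ≤ m.factorial * c ^ (c - m) * c ^ m :=
      Nat.mul_le_mul_right _ hnat
    have h2 : c.factorial * c ^ m ≤ m.factorial * c ^ c := by
      rwa [mul_assoc, ← pow_add, show c - m + m = c by omega] at this
    exact_mod_cast h2


lemma aux_fac_prod (c : ℕ) : ∀ n : ℕ, (c.factorial : ℝ) * ∏ j ∈ Finset.range n, ((c:ℝ) + j + 1) = ((c + n).factorial : ℝ) := by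
  intro n
  induction n with
  | zero => simp
  | succ n ih =>
    rw [Finset.prod_range_succ, ← mul_assoc, ih,
      show c + (n+1) = (c + n) + 1 by ring, Nat.factorial_succ]
    push_cast
    ring

-- sum of (j+1) over range n
lemma aux_sum_range (n : ℕ) : ∑ j ∈ Finset.range n, ((j:ℝ) + 1) = n * (n + 1) / 2 := by
  induction n with
  | zero => simp
  | succ n ih =>
    rw [Finset.sum_range_succ, ih]
    push_cast
    ring

-- core: c^(2δ) * exp(δ(δ-1)/(c+δ)) ≤ (c+2δ)!/c!
lemma aux_core (c δ : ℕ) (hc : 1 ≤ c) (hδ : 1 ≤ δ) :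
    (c.factorial : ℝ) * (c:ℝ)^(2*δ) * Real.exp (((δ:ℝ) * ((δ:ℝ) - 1))/((c:ℝ)+δ)) ≤ ((c + 2*δ).factorial : ℝ) := by
  have hc0 : (0:ℝ) < c := by exact_mod_cast hc
  have hδ0 : (1:ℝ) ≤ δ := by exact_mod_cast hδ
  rw [← aux_fac_prod c (2*δ)]
  have key : (c:ℝ)^(2*δ) * Real.exp (∑ j ∈ Finset.range (2*δ), ((j:ℝ)+1)/((c:ℝ)+j+1))
      ≤ ∏ j ∈ Finset.range (2*δ), ((c:ℝ) + j + 1) := by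
    rw [Real.exp_sum, show ((c:ℝ))^(2*δ) = ∏ _j ∈ Finset.range (2*δ), (c:ℝ) by
      rw [Finset.prod_const, Finset.card_range], ← Finset.prod_mul_distrib]
    apply Finset.prod_le_prod
    · intro j _; positivity
    · intro j _
      have := aux_exp_div_le (c:ℝ) ((j:ℝ)+1) hc0 (by positivity)
      rw [show (c:ℝ) + ((j:ℝ)+1) = (c:ℝ) + j + 1 by ring] at this
      exact this
  have hsum : ((δ:ℝ) * ((δ:ℝ) - 1))/((c:ℝ)+δ) ≤ ∑ j ∈ Finset.range (2*δ), ((j:ℝ)+1)/((c:ℝ)+j+1) := by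
    have h1 : ∑ j ∈ Finset.range (2*δ), ((j:ℝ)+1)/((c:ℝ)+2*δ)
        ≤ ∑ j ∈ Finset.range (2*δ), ((j:ℝ)+1)/((c:ℝ)+j+1) := by
      apply Finset.sum_le_sum
      intro j hj
      have hjn : j + 1 ≤ 2*δ := Finset.mem_range.mp hj
      have hj' : (j:ℝ) + 1 ≤ 2*(δ:ℝ) := by exact_mod_cast hjn
      apply div_le_div_of_nonneg_left (by positivity) (by positivity) (by linarith)
    have h2 : ∑ j ∈ Finset.range (2*δ), ((j:ℝ)+1)/((c:ℝ)+2*δ)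
        = (δ:ℝ) * (2*δ + 1) / ((c:ℝ)+2*δ) := by
      rw [← Finset.sum_div, aux_sum_range]
      push_cast
      ring
    have h3 : ((δ:ℝ) * ((δ:ℝ) - 1))/((c:ℝ)+δ) ≤ (δ:ℝ) * (2*δ + 1) / ((c:ℝ)+2*δ) := by
      rw [div_le_div_iff₀ (by linarith) (by linarith)]
      have hδ0' : (0:ℝ) < δ := by linarith
      nlinarith [mul_pos hδ0' hc0, mul_pos hδ0' hδ0', mul_pos (mul_pos hδ0' hδ0') hc0]
    linarith [h1, h2 ▸ h1, h3]
  calc (c.factorial : ℝ) * (c:ℝ)^(2*δ) * Real.exp (((δ:ℝ) * ((δ:ℝ) - 1))/((c:ℝ)+δ))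
      ≤ (c.factorial : ℝ) * ((c:ℝ)^(2*δ) * Real.exp (∑ j ∈ Finset.range (2*δ), ((j:ℝ)+1)/((c:ℝ)+j+1))) := by
        rw [mul_assoc]
        apply mul_le_mul_of_nonneg_left _ (by positivity)
        exact mul_le_mul_of_nonneg_left (Real.exp_le_exp.mpr hsum) (by positivity)
    _ ≤ (c.factorial : ℝ) * ∏ j ∈ Finset.range (2*δ), ((c:ℝ) + j + 1) :=
        mul_le_mul_of_nonneg_left key (by positivity)

lemma aux_L' (m c δ : ℕ) (hc : 1 ≤ c) (hδ : 1 ≤ δ) (hm : c + 2*δ ≤ m) :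
    (c.factorial : ℝ) * (c:ℝ)^m * Real.exp (((δ:ℝ) * ((δ:ℝ) - 1))/((c:ℝ)+δ))
      ≤ (m.factorial : ℝ) * (c:ℝ)^c := by
  have hc0 : (0:ℝ) < c := by exact_mod_cast hc
  have hnat : (c + 2*δ).factorial * c ^ (m - (c + 2*δ)) ≤ m.factorial := by
    have := aux_fac_lower (c + 2*δ) c (by omega) (m - (c + 2*δ))
    rwa [show c + 2*δ + (m - (c + 2*δ)) = m by omega] at this
  have hnatR : ((c + 2*δ).factorial : ℝ) * (c:ℝ) ^ (m - (c + 2*δ)) ≤ (m.factorial : ℝ) := by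
    exact_mod_cast hnat
  have hpow : (c:ℝ)^m = (c:ℝ)^(2*δ) * (c:ℝ)^(m - (c+2*δ)) * (c:ℝ)^c := by
    rw [← pow_add, ← pow_add]; congr 1; omega
  calc (c.factorial : ℝ) * (c:ℝ)^m * Real.exp (((δ:ℝ) * ((δ:ℝ) - 1))/((c:ℝ)+δ))
      = ((c.factorial : ℝ) * (c:ℝ)^(2*δ) * Real.exp (((δ:ℝ) * ((δ:ℝ) - 1))/((c:ℝ)+δ)))
        * (c:ℝ)^(m - (c+2*δ)) * (c:ℝ)^c := by rw [hpow]; ring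
    _ ≤ (((c + 2*δ).factorial : ℝ)) * (c:ℝ)^(m - (c+2*δ)) * (c:ℝ)^c := by
        apply mul_le_mul_of_nonneg_right _ (by positivity)
        exact mul_le_mul_of_nonneg_right (aux_core c δ hc hδ) (by positivity)
    _ ≤ (m.factorial : ℝ) * (c:ℝ)^c :=
        mul_le_mul_of_nonneg_right hnatR (by positivity)

/-- Let `x 1 ≥ … ≥ x t ≥ 0` and `y 1 ≥ … ≥ y t ≥ 0` be non-negative integers with
`∑ x i = ∑ y i = S`.  Let `c = ⌊S/t⌋`, let `k ≥ 0` satisfy `|x i - c| ≤ k` for all `i`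
and `c > k`, and let `δ ≥ 1` be an integer with `y 1 ≥ c + 2δ`.  Then
`∏ i, x i ! / y i ! ≤ exp (-δ(δ-1)/(c+δ) + 2k²t/(c-k))`. -/
theorem statement15 (t : ℕ) (ht : 0 < t) (x y : Fin t → ℕ)
    (hx : Antitone x) (hy : Antitone y) (S : ℕ)
    (hxS : ∑ i, x i = S) (hyS : ∑ i, y i = S)
    (c : ℕ) (hc : c = S / t)
    (k : ℕ) (hk : ∀ i, |(x i : ℤ) - (c : ℤ)| ≤ (k : ℤ)) (hck : k < c)
    (δ : ℕ) (hδ : 1 ≤ δ) (hy1 : c + 2 * δ ≤ y ⟨0, ht⟩) :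
    (∏ i, (Nat.factorial (x i) : ℝ) / (Nat.factorial (y i) : ℝ)) ≤
      Real.exp (-((δ : ℝ) * ((δ : ℝ) - 1)) / ((c : ℝ) + (δ : ℝ))
        + 2 * (k : ℝ) ^ 2 * (t : ℝ) / ((c : ℝ) - (k : ℝ))) := by
  classical
  have hc1 : 1 ≤ c := by omega
  have hc0 : (0:ℝ) < c := by exact_mod_cast hc1
  have hckR : (0:ℝ) < (c:ℝ) - k := by
    have : (k:ℝ) < c := by exact_mod_cast hck
    linarith
  set i0 : Fin t := ⟨0, ht⟩
  set E : ℝ := Real.exp ((k:ℝ)^2/((c:ℝ)-k)) with hE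
  set D : ℝ := Real.exp (((δ:ℝ) * ((δ:ℝ) - 1))/((c:ℝ)+δ)) with hD
  have hEpos : 0 < E := Real.exp_pos _
  have hDpos : 0 < D := Real.exp_pos _
  set M : ℝ := ((c:ℝ)^c)^t with hM
  have hMpos : 0 < M := by positivity
  -- upper bound on ∏ x i !
  have hP : (∏ i, ((x i).factorial : ℝ)) * M ≤ (c.factorial : ℝ)^t * (c:ℝ)^S * E^t := by
    have lhs_eq : (∏ i, ((x i).factorial : ℝ)) * M = ∏ i, (((x i).factorial : ℝ) * (c:ℝ)^c) := by
      rw [Finset.prod_mul_distrib, Finset.prod_const, card_univ, Fintype.card_fin]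
    have rhs_eq : (c.factorial : ℝ)^t * (c:ℝ)^S * E^t
        = ∏ i : Fin t, ((c.factorial : ℝ) * (c:ℝ)^(x i) * E) := by
      rw [Finset.prod_mul_distrib, Finset.prod_mul_distrib, Finset.prod_const,
        Finset.prod_const, card_univ, Fintype.card_fin, Finset.prod_pow_eq_pow_sum, hxS]
    rw [lhs_eq, rhs_eq]
    apply Finset.prod_le_prod
    · intro i _; positivity
    · intro i _; exact aux_U (x i) c k (hk i) hck
  -- lower bound on ∏ y i !
  have hQ : (c.factorial : ℝ)^t * (c:ℝ)^S * D ≤ (∏ i, ((y i).factorial : ℝ)) * M := by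
    have rhs_eq : (∏ i, ((y i).factorial : ℝ)) * M = ∏ i, (((y i).factorial : ℝ) * (c:ℝ)^c) := by
      rw [Finset.prod_mul_distrib, Finset.prod_const, card_univ, Fintype.card_fin]
    have lhs_eq : (c.factorial : ℝ)^t * (c:ℝ)^S * D
        = ∏ i : Fin t, ((c.factorial : ℝ) * (c:ℝ)^(y i) * (if i = i0 then D else 1)) := by
      rw [Finset.prod_mul_distrib, Finset.prod_mul_distrib, Finset.prod_const,
        card_univ, Fintype.card_fin, Finset.prod_pow_eq_pow_sum, hyS]
      congr 1
      rw [Finset.prod_ite_eq' Finset.univ i0 (fun _ => D)]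
      simp
    rw [rhs_eq, lhs_eq]
    apply Finset.prod_le_prod
    · intro i _; positivity
    · intro i _
      by_cases hi : i = i0
      · rw [if_pos hi, hi]
        exact aux_L' (y i0) c δ hc1 hδ hy1
      · rw [if_neg hi, mul_one]
        exact aux_L (y i) c
  -- combine
  have hprod : (∏ i, ((x i).factorial : ℝ) / ((y i).factorial : ℝ))
      = (∏ i, ((x i).factorial : ℝ)) / (∏ i, ((y i).factorial : ℝ)) :=
    Finset.prod_div_distrib _ _
  have hQpos : (0:ℝ) < ∏ i, ((y i).factorial : ℝ) := by
    apply Finset.prod_pos; intro i _; exact_mod_cast (y i).factorial_pos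
  have hfr : (∏ i, ((x i).factorial : ℝ)) / (∏ i, ((y i).factorial : ℝ))
      = ((∏ i, ((x i).factorial : ℝ)) * M) / ((∏ i, ((y i).factorial : ℝ)) * M) := by
    rw [mul_div_mul_right _ _ (ne_of_gt hMpos)]
  have hbase : (0:ℝ) < (c.factorial : ℝ)^t * (c:ℝ)^S := by positivity
  have hdiv : ((∏ i, ((x i).factorial : ℝ)) * M) / ((∏ i, ((y i).factorial : ℝ)) * M)
      ≤ ((c.factorial : ℝ)^t * (c:ℝ)^S * E^t) / ((c.factorial : ℝ)^t * (c:ℝ)^S * D) := by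
    apply div_le_div₀ (by positivity) hP (by positivity) hQ
  have hfinal : ((c.factorial : ℝ)^t * (c:ℝ)^S * E^t) / ((c.factorial : ℝ)^t * (c:ℝ)^S * D)
      ≤ Real.exp (-((δ : ℝ) * ((δ : ℝ) - 1)) / ((c : ℝ) + (δ : ℝ))
        + 2 * (k : ℝ) ^ 2 * (t : ℝ) / ((c : ℝ) - (k : ℝ))) := by
    rw [mul_div_mul_left _ _ (ne_of_gt hbase), hE, hD, ← Real.exp_nat_mul, ← Real.exp_sub]
    apply Real.exp_le_exp.mpr
    have h1 : (0:ℝ) ≤ (t:ℝ) * ((k:ℝ)^2/((c:ℝ)-k)) := by positivity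
    have h2 : (t:ℝ) * ((k:ℝ)^2/((c:ℝ)-k)) ≤ 2 * (k:ℝ)^2 * (t:ℝ) / ((c:ℝ)-k) := by
      have heq : (t:ℝ) * ((k:ℝ)^2/((c:ℝ)-k)) = (t:ℝ)*(k:ℝ)^2/((c:ℝ)-k) := by ring
      rw [heq, div_le_div_iff₀ hckR hckR]
      have ht0 : (0:ℝ) ≤ t := Nat.cast_nonneg t
      nlinarith [mul_nonneg (mul_nonneg (sq_nonneg (k:ℝ)) ht0) hckR.le]
    have h3 : -((δ : ℝ) * ((δ : ℝ) - 1)) / ((c : ℝ) + (δ : ℝ))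
        = -(((δ:ℝ) * ((δ:ℝ) - 1))/((c:ℝ)+δ)) := by ring
    linarith [h2]
  calc (∏ i, ((x i).factorial : ℝ) / ((y i).factorial : ℝ))
      = ((∏ i, ((x i).factorial : ℝ)) * M) / ((∏ i, ((y i).factorial : ℝ)) * M) := by
        rw [hprod, hfr]
    _ ≤ ((c.factorial : ℝ)^t * (c:ℝ)^S * E^t) / ((c.factorial : ℝ)^t * (c:ℝ)^S * D) := hdiv
    _ ≤ _ := hfinal
end

section
/- Let r ≥ 2 and let G′ be a complete r-partite graph with parts V′_1, …, V′_r, let M′ be a perfect matching of G′, and let α = sup_{N≥2} N!/d_N, where d_N is the number of derangements of [N]. For a perfect matching P of G′, let S(P) = (P_{i,j})_{i≠j∈[r]}, where P_{i,j} is the set of vertices x ∈ V′_i matched by P to a vertex of V′_j. Suppose S = S(P₀) for some perfect matching P₀ of G′ with P₀ ∩ M′ = ∅. Then the number of perfect matchings U of G′ with S(U) = S is at most α^{binom(r,2)} times the number of perfect matchings U of G′ with S(U) = S and U ∩ M′ = ∅. -/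
open SimpleGraph

/-- `α = sup_{N ≥ 2} N! / d_N`, where `d_N` is the number of derangements of `[N]`. -/
noncomputable def alphaDer : ℝ :=
  sSup {x : ℝ | ∃ N : ℕ, 2 ≤ N ∧ x = (Nat.factorial N : ℝ) / (numDerangements N : ℝ)}

set_option linter.unusedSectionVars false
set_option maxHeartbeats 1000000

open Function

section Numerics

lemma fact_le_three_mul : ∀ n : ℕ, 2 ≤ n → n.factorial ≤ 3 * numDerangements n := by
  have key : ∀ k : ℕ, (k+2).factorial ≤ 3 * numDerangements (k+2) ∧
      (k+3).factorial ≤ 3 * numDerangements (k+3) := by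
    intro k
    induction k with
    | zero => simp [numDerangements_add_two, Nat.factorial]
    | succ n ih =>
      refine ⟨ih.2, ?_⟩
      have h4 : n + 1 + 3 = (n + 2) + 2 := by ring
      rw [h4, numDerangements_add_two]
      have h5 : ((n+2)+2).factorial = (n+4) * (n+3).factorial := by
        show (n+4).factorial = _
        rw [show n+4 = (n+3)+1 by ring, Nat.factorial_succ]
      have h6 : (n+3).factorial = (n+3) * (n+2).factorial := by
        rw [show n+3 = (n+2)+1 by ring, Nat.factorial_succ]
      nlinarith [ih.1, ih.2]
  intro n hn
  obtain ⟨k, rfl⟩ : ∃ k, n = k + 2 := ⟨n - 2, by omega⟩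
  exact (key k).1

lemma numDerangements_pos' {n : ℕ} (hn : 2 ≤ n) : 0 < numDerangements n := by
  have := fact_le_three_mul n hn
  have := Nat.factorial_pos n
  omega

lemma alphaDer_eq_three : alphaDer = 3 := by
  apply IsGreatest.csSup_eq
  constructor
  · exact ⟨3, by norm_num, by norm_num [show numDerangements 3 = 2 from by decide, Nat.factorial]⟩
  · rintro x ⟨N, hN, rfl⟩
    have hd := numDerangements_pos' hN
    have h3 := fact_le_three_mul N hN
    rw [div_le_iff₀ (by positivity)]
    calc (N.factorial : ℝ) ≤ 3 * numDerangements N := by exact_mod_cast h3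
    _ = _ := by ring

end Numerics

section Avoid
variable {α γ : Type} [Fintype α] [Fintype γ]

lemma exists_equiv_extend (e₀ : α ≃ γ) (v : α → Option γ)
    (hv : ∀ a b c, v a = some c → v b = some c → a = b) :
    ∃ M : α ≃ γ, ∀ a c, v a = some c → M a = c := by
  classical
  have hcard : Fintype.card α = (Finset.univ : Finset γ).card := by
    rw [Finset.card_univ]; exact Fintype.card_congr e₀
  set f : α → γ := fun a => (v a).getD (e₀ a) with hf
  have hmt : Set.MapsTo f {a | (v a).isSome} ((Finset.univ : Finset γ) : Set γ) :=
    fun a _ => Finset.mem_univ _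
  have hinj : Set.InjOn f {a | (v a).isSome} := by
    intro a ha b hb hab
    obtain ⟨c, hc⟩ := Option.isSome_iff_exists.mp ha
    obtain ⟨d, hd⟩ := Option.isSome_iff_exists.mp hb
    rw [hf] at hab
    simp only [hc, hd, Option.getD_some] at hab
    exact hv a b c hc (hab ▸ hd)
  obtain ⟨g, hg⟩ := Set.MapsTo.exists_equiv_extend_of_card_eq hcard hmt hinj
  refine ⟨g.trans (Equiv.subtypeUnivEquiv (fun x => Finset.mem_univ x)), ?_⟩
  intro a c hac
  have h1 := hg a (by simp [Set.mem_setOf_eq, hac])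
  have h2 : f a = c := by rw [hf]; simp [hac]
  simpa [Equiv.trans_apply, Equiv.subtypeUnivEquiv, h2] using h1

lemma numDerangements_le_card_avoid (e₀ : α ≃ γ) (v : α → Option γ)
    (hv : ∀ a b c, v a = some c → v b = some c → a = b) :
    numDerangements (Fintype.card α) ≤
      Nat.card {g : α ≃ γ // ∀ a c, v a = some c → g a ≠ c} := by
  classical
  obtain ⟨M, hM⟩ := exists_equiv_extend e₀ v hv
  have E : {σ : Equiv.Perm α // ∀ a c, v a = some c → σ a ≠ a} ≃
      {g : α ≃ γ // ∀ a c, v a = some c → g a ≠ c} := by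
    refine Equiv.subtypeEquiv (Equiv.equivCongr (Equiv.refl α) M) ?_
    intro σ
    constructor
    · intro h a c hac hMc
      have hMa := hM a c hac
      have hσa : M (σ a) = c := hMc
      exact h a c hac (M.injective (hσa.trans hMa.symm))
    · intro h a c hac hσ
      exact h a c hac (by simp [Equiv.equivCongr, hσ, hM a c hac])
  have hsub : derangements α ⊆ {σ : Equiv.Perm α | ∀ a c, v a = some c → σ a ≠ a} :=
    fun σ hσ a c _ => hσ a
  calc numDerangements (Fintype.card α) = Nat.card (derangements α) := by
        rw [Nat.card_eq_fintype_card, card_derangements_eq_numDerangements]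
    _ ≤ Nat.card {σ : Equiv.Perm α | ∀ a c, v a = some c → σ a ≠ a} :=
        Nat.card_mono (Set.toFinite _) hsub
    _ = Nat.card {g : α ≃ γ // ∀ a c, v a = some c → g a ≠ c} := Nat.card_congr E

end Avoid

lemma card_pairs (r : ℕ) : Nat.card {p : Fin r × Fin r // p.1 < p.2} = r.choose 2 := by
  have e : {p : Fin r × Fin r // p.1 < p.2} ≃ Σ j : Fin r, Set.Iio j :=
    { toFun := fun p => ⟨p.1.2, p.1.1, p.2⟩
      invFun := fun x => ⟨(x.2.1, x.1), x.2.2⟩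
      left_inv := fun p => rfl
      right_inv := fun x => rfl }
  rw [Nat.card_congr e, Nat.card_eq_fintype_card, Fintype.card_sigma]
  simp only [← Set.toFinset_card, Set.toFinset_Iio, Fin.card_Iio]
  rw [show (∑ x : Fin r, (x : ℕ)) = ∑ i ∈ Finset.range r, i from
    Fin.sum_univ_eq_sum_range (fun i => i) r, Finset.sum_range_id, Nat.choose_two_right]

open Function

section Invol

variable {r : ℕ} {β : Fin r → Type}

/-- vertices in part `i` matched by `f₀` into part `j` -/
abbrev PartSet (f₀ : (Σ i, β i) → Σ i, β i) (i j : Fin r) : Type :=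
  {x : Σ i', β i' // x.1 = i ∧ (f₀ x).1 = j}

/-- ordered pairs -/
abbrev Pairs (r : ℕ) := {p : Fin r × Fin r // p.1 < p.2}

variable (f₀ : (Σ i, β i) → Σ i, β i)

/-- restriction of a compatible involution to a part pair -/
def restrictEquiv (f : (Σ i, β i) → Σ i, β i) (hf : Involutive f)
    (hpat : ∀ x, (f x).1 = (f₀ x).1) (i j : Fin r) :
    PartSet f₀ i j ≃ PartSet f₀ j i where
  toFun a := ⟨f a.1, by rw [hpat]; exact a.2.2, by rw [← hpat, hf]; exact a.2.1⟩
  invFun b := ⟨f b.1, by rw [hpat]; exact b.2.2, by rw [← hpat, hf]; exact b.2.1⟩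
  left_inv a := Subtype.ext (hf a.1)
  right_inv b := Subtype.ext (hf b.1)

variable (hne : ∀ x : Σ i, β i, x.1 ≠ (f₀ x).1)

/-- symmetrized family of equivs -/
def Wfam (w : ∀ p : Pairs r, PartSet f₀ p.1.1 p.1.2 ≃ PartSet f₀ p.1.2 p.1.1)
    (i j : Fin r) (h : i ≠ j) : PartSet f₀ i j ≃ PartSet f₀ j i :=
  if hlt : i < j then w ⟨(i, j), hlt⟩
  else (w ⟨(j, i), (h.lt_or_gt).resolve_left hlt⟩).symm

lemma Wfam_symm (w : ∀ p : Pairs r, PartSet f₀ p.1.1 p.1.2 ≃ PartSet f₀ p.1.2 p.1.1)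
    (i j : Fin r) (h : i ≠ j) :
    Wfam f₀ w j i h.symm = (Wfam f₀ w i j h).symm := by
  rcases h.lt_or_gt with hlt | hlt
  · rw [Wfam, Wfam, dif_pos hlt, dif_neg (not_lt.mpr hlt.le)]
  · rw [Wfam, Wfam, dif_pos hlt, dif_neg (not_lt.mpr hlt.le), Equiv.symm_symm]

/-- reconstruction of the involution from the family -/
def backFun (w : ∀ p : Pairs r, PartSet f₀ p.1.1 p.1.2 ≃ PartSet f₀ p.1.2 p.1.1) :
    (Σ i, β i) → Σ i, β i :=
  fun z => (Wfam f₀ w z.1 (f₀ z).1 (hne z) ⟨z, rfl, rfl⟩).1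

lemma backFun_eq (w : ∀ p : Pairs r, PartSet f₀ p.1.1 p.1.2 ≃ PartSet f₀ p.1.2 p.1.1)
    (z : Σ i, β i) (i j : Fin r) (h1 : z.1 = i) (h2 : (f₀ z).1 = j) (hij : i ≠ j) :
    backFun f₀ hne w z = (Wfam f₀ w i j hij ⟨z, h1, h2⟩).1 := by
  subst h1; subst h2; rfl

lemma backFun_pattern (w : ∀ p : Pairs r, PartSet f₀ p.1.1 p.1.2 ≃ PartSet f₀ p.1.2 p.1.1)
    (z : Σ i, β i) : (backFun f₀ hne w z).1 = (f₀ z).1 :=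
  (Wfam f₀ w z.1 (f₀ z).1 (hne z) ⟨z, rfl, rfl⟩).2.1

lemma backFun_pattern' (w : ∀ p : Pairs r, PartSet f₀ p.1.1 p.1.2 ≃ PartSet f₀ p.1.2 p.1.1)
    (z : Σ i, β i) : (f₀ (backFun f₀ hne w z)).1 = z.1 :=
  (Wfam f₀ w z.1 (f₀ z).1 (hne z) ⟨z, rfl, rfl⟩).2.2

lemma backFun_invol (w : ∀ p : Pairs r, PartSet f₀ p.1.1 p.1.2 ≃ PartSet f₀ p.1.2 p.1.1) :
    Involutive (backFun f₀ hne w) := by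
  intro z
  set y := Wfam f₀ w z.1 (f₀ z).1 (hne z) ⟨z, rfl, rfl⟩ with hy
  have h1 : backFun f₀ hne w (y.1) =
      (Wfam f₀ w (f₀ z).1 z.1 (hne z).symm ⟨y.1, y.2.1, y.2.2⟩).1 :=
    backFun_eq f₀ hne w y.1 (f₀ z).1 z.1 y.2.1 y.2.2 (hne z).symm
  show backFun f₀ hne w y.1 = z
  rw [h1, Wfam_symm f₀ w z.1 (f₀ z).1 (hne z)]
  have h2 : (⟨y.1, y.2.1, y.2.2⟩ : PartSet f₀ (f₀ z).1 z.1) =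
      Wfam f₀ w z.1 (f₀ z).1 (hne z) ⟨z, rfl, rfl⟩ := Subtype.ext rfl
  rw [h2, Equiv.symm_apply_apply]

end Invol
section Master

variable {r : ℕ} {β : Fin r → Type}
variable (f₀ : (Σ i, β i) → Σ i, β i)
variable (hne : ∀ x : Σ i, β i, x.1 ≠ (f₀ x).1)

/-- the master equivalence -/
noncomputable def masterEquiv :
    {f : (Σ i, β i) → Σ i, β i // Involutive f ∧ ∀ x, (f x).1 = (f₀ x).1} ≃
      (∀ p : Pairs r, PartSet f₀ p.1.1 p.1.2 ≃ PartSet f₀ p.1.2 p.1.1) where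
  toFun f p := restrictEquiv f₀ f.1 f.2.1 f.2.2 p.1.1 p.1.2
  invFun w := ⟨backFun f₀ hne w, backFun_invol f₀ hne w, backFun_pattern f₀ hne w⟩
  left_inv f := by
    apply Subtype.ext
    funext z
    show backFun f₀ hne _ z = f.1 z
    rw [backFun, Wfam]
    by_cases hlt : z.1 < (f₀ z).1
    · rw [dif_pos hlt]; rfl
    · rw [dif_neg hlt]; rfl
  right_inv w := by
    funext p
    obtain ⟨⟨i, j⟩, hlt⟩ := p
    apply Equiv.ext
    intro a
    apply Subtype.ext
    show backFun f₀ hne w a.1 = _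
    rw [backFun_eq f₀ hne w a.1 i j a.2.1 a.2.2 (ne_of_lt hlt), Wfam, dif_pos hlt]

lemma masterEquiv_avoid (fM : (Σ i, β i) → Σ i, β i) (hMinv : Involutive fM)
    (f : {f : (Σ i, β i) → Σ i, β i // Involutive f ∧ ∀ x, (f x).1 = (f₀ x).1}) :
    (∀ x, f.1 x ≠ fM x) ↔
      ∀ p : Pairs r, ∀ a : PartSet f₀ p.1.1 p.1.2,
        ((masterEquiv f₀ hne f p) a).1 ≠ fM a.1 := by
  constructor
  · intro h p a
    exact h a.1
  · intro h x hx
    rcases (hne x).lt_or_gt with hlt | hlt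
    · exact h ⟨(x.1, (f₀ x).1), hlt⟩ ⟨x, rfl, rfl⟩ hx
    · have ha2 : (f₀ (f.1 x)).1 = x.1 := by rw [← f.2.2, f.2.1]
      have := h ⟨((f₀ x).1, x.1), hlt⟩ ⟨f.1 x, f.2.2 x, ha2⟩
      apply this
      show f.1 (f.1 x) = fM (f.1 x)
      rw [f.2.1 x, hx, hMinv]

end Master

section MatchFun
variable {r : ℕ} {β : Fin r → Type}
variable {U : (completeMultipartiteGraph β).Subgraph}

noncomputable def mFun (hU : U.IsPerfectMatching) : (Σ i, β i) → (Σ i, β i) :=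
  fun x => ((SimpleGraph.Subgraph.isPerfectMatching_iff (M := U)).mp hU x).choose

lemma mFun_adj (hU : U.IsPerfectMatching) (x : Σ i, β i) : U.Adj x (mFun hU x) :=
  ((SimpleGraph.Subgraph.isPerfectMatching_iff (M := U)).mp hU x).choose_spec.1

lemma mFun_unique (hU : U.IsPerfectMatching) {x y : Σ i, β i} (h : U.Adj x y) :
    y = mFun hU x :=
  ((SimpleGraph.Subgraph.isPerfectMatching_iff (M := U)).mp hU x).choose_spec.2 y h

lemma mFun_invol (hU : U.IsPerfectMatching) : Involutive (mFun hU) := by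
  intro x
  exact (mFun_unique hU ((mFun_adj hU x).symm)).symm

lemma mFun_ne_fst (hU : U.IsPerfectMatching) (x : Σ i, β i) : x.1 ≠ (mFun hU x).1 :=
  U.adj_sub (mFun_adj hU x)

/-- subgraph built from an involution -/
def subOf (f : (Σ i, β i) → Σ i, β i) (hinv : Involutive f)
    (hnef : ∀ x, x.1 ≠ (f x).1) : (completeMultipartiteGraph β).Subgraph where
  verts := Set.univ
  Adj x y := f x = y
  adj_sub := by rintro x y rfl; exact hnef x
  edge_vert := fun _ => Set.mem_univ _
  symm := ⟨by rintro x y rfl; exact hinv x⟩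

lemma subOf_isPerfectMatching (f : (Σ i, β i) → Σ i, β i) (hinv : Involutive f)
    (hnef : ∀ x, x.1 ≠ (f x).1) : (subOf f hinv hnef).IsPerfectMatching := by
  rw [SimpleGraph.Subgraph.isPerfectMatching_iff]
  exact fun v => ⟨f v, rfl, fun y hy => Eq.symm hy⟩

lemma mFun_subOf (f : (Σ i, β i) → Σ i, β i) (hinv : Involutive f)
    (hnef : ∀ x, x.1 ≠ (f x).1) :
    mFun (subOf_isPerfectMatching f hinv hnef) = f := by
  funext x
  exact (mFun_unique (subOf_isPerfectMatching f hinv hnef)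
    (show f x = f x from rfl)).symm

lemma subOf_mFun (hU : U.IsPerfectMatching) :
    subOf (mFun hU) (mFun_invol hU) (mFun_ne_fst hU) = U := by
  apply SimpleGraph.Subgraph.ext
  · exact (Set.eq_univ_of_forall hU.2).symm
  · funext x y
    apply propext
    constructor
    · rintro rfl; exact mFun_adj hU x
    · intro h; exact (mFun_unique hU h).symm

/-- the pattern condition in terms of partner functions -/
lemma pattern_iff {U' : (completeMultipartiteGraph β).Subgraph}
    (hU : U.IsPerfectMatching) (hU' : U'.IsPerfectMatching) :
    (∀ i j : Fin r,
        {x : Σ i', β i' | x.1 = i ∧ ∃ y, U.Adj x y ∧ y.1 = j} =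
          {x : Σ i', β i' | x.1 = i ∧ ∃ y, U'.Adj x y ∧ y.1 = j}) ↔
      ∀ x, (mFun hU x).1 = (mFun hU' x).1 := by
  constructor
  · intro h x
    have hx : x ∈ {x' : Σ i', β i' | x'.1 = x.1 ∧ ∃ y, U'.Adj x' y ∧ y.1 = (mFun hU' x).1} :=
      ⟨rfl, mFun hU' x, mFun_adj hU' x, rfl⟩
    rw [← h x.1 (mFun hU' x).1] at hx
    obtain ⟨-, y, hy, hy1⟩ := hx
    rw [mFun_unique hU hy] at hy1
    exact hy1
  · intro h i j
    ext x
    simp only [Set.mem_setOf_eq]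
    constructor
    · rintro ⟨hx1, y, hy, hyj⟩
      exact ⟨hx1, mFun hU' x, mFun_adj hU' x, by rw [← h x, ← mFun_unique hU hy]; exact hyj⟩
    · rintro ⟨hx1, y, hy, hyj⟩
      exact ⟨hx1, mFun hU x, mFun_adj hU x, by rw [h x, ← mFun_unique hU' hy]; exact hyj⟩

/-- the disjointness condition in terms of partner functions -/
lemma disj_iff {M : (completeMultipartiteGraph β).Subgraph}
    (hU : U.IsPerfectMatching) (hM : M.IsPerfectMatching) :
    U.edgeSet ∩ M.edgeSet = ∅ ↔ ∀ x, mFun hU x ≠ mFun hM x := by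
  constructor
  · intro h x hx
    have : s(x, mFun hU x) ∈ U.edgeSet ∩ M.edgeSet :=
      ⟨(SimpleGraph.Subgraph.mem_edgeSet).mpr (mFun_adj hU x),
       (SimpleGraph.Subgraph.mem_edgeSet).mpr (hx ▸ mFun_adj hM x)⟩
    rw [h] at this
    exact this
  · intro h
    rw [Set.eq_empty_iff_forall_notMem]
    intro e
    induction e with
    | _ x y =>
      rintro ⟨heU, heM⟩
      rw [SimpleGraph.Subgraph.mem_edgeSet] at heU heM
      exact h x ((mFun_unique hU heU).symm.trans (mFun_unique hM heM))

end MatchFun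

section PairBound

variable {r : ℕ} {β : Fin r → Type} [∀ i, Fintype (β i)]

lemma pair_bound (f₀ fM : (Σ i, β i) → Σ i, β i) (h₀inv : Involutive f₀)
    (hMinv : Involutive fM) (hdisj' : ∀ x, f₀ x ≠ fM x) (i j : Fin r) :
    Nat.card (PartSet f₀ i j ≃ PartSet f₀ j i) ≤
      3 * Nat.card {g : PartSet f₀ i j ≃ PartSet f₀ j i //
        ∀ a : PartSet f₀ i j, (g a).1 ≠ fM a.1} := by
  classical
  set g₀ : PartSet f₀ i j ≃ PartSet f₀ j i :=
    restrictEquiv f₀ f₀ h₀inv (fun _ => rfl) i j with hg₀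
  have htot : Nat.card (PartSet f₀ i j ≃ PartSet f₀ j i) =
      (Fintype.card (PartSet f₀ i j)).factorial := by
    rw [Nat.card_eq_fintype_card, Fintype.card_equiv g₀]
  haveI : Nonempty {g : PartSet f₀ i j ≃ PartSet f₀ j i //
      ∀ a : PartSet f₀ i j, (g a).1 ≠ fM a.1} :=
    ⟨⟨g₀, fun a => hdisj' a.1⟩⟩
  have hpos : 0 < Nat.card {g : PartSet f₀ i j ≃ PartSet f₀ j i //
      ∀ a : PartSet f₀ i j, (g a).1 ≠ fM a.1} := Nat.card_pos
  by_cases hn : Fintype.card (PartSet f₀ i j) ≤ 1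
  · rw [htot]
    have h1 : (Fintype.card (PartSet f₀ i j)).factorial = 1 := by
      interval_cases h : Fintype.card (PartSet f₀ i j) <;> rfl
    omega
  · push_neg at hn
    -- the partial forbidden map
    set v : PartSet f₀ i j → Option (PartSet f₀ j i) := fun a =>
      if h : (fM a.1).1 = j ∧ (f₀ (fM a.1)).1 = i then some ⟨fM a.1, h⟩ else none with hv
    have hval : ∀ a c, v a = some c → c.1 = fM a.1 := by
      intro a c hac
      rw [hv] at hac
      by_cases h : (fM a.1).1 = j ∧ (f₀ (fM a.1)).1 = i
      · simp only [dif_pos h] at hac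
        rw [← Option.some.inj hac]
      · simp only [dif_neg h] at hac
        exact absurd hac (by simp)
    have hvinj : ∀ a b c, v a = some c → v b = some c → a = b := by
      intro a b c hac hbc
      have ha := hval a c hac
      have hb := hval b c hbc
      have : fM a.1 = fM b.1 := ha ▸ hb ▸ rfl
      exact Subtype.ext (hMinv.injective this)
    have hQiff : ∀ g : PartSet f₀ i j ≃ PartSet f₀ j i,
        (∀ a c, v a = some c → g a ≠ c) ↔ ∀ a : PartSet f₀ i j, (g a).1 ≠ fM a.1 := by
      intro g
      constructor
      · intro h a heq
        have hc : (fM a.1).1 = j ∧ (f₀ (fM a.1)).1 = i := by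
          rw [← heq]; exact (g a).2
        have hva : v a = some ⟨fM a.1, hc⟩ := by rw [hv]; exact dif_pos hc
        exact h a ⟨fM a.1, hc⟩ hva (Subtype.ext heq)
      · intro h a c hac hg
        exact h a (by rw [hg]; exact hval a c hac)
    have hcards : Nat.card {g : PartSet f₀ i j ≃ PartSet f₀ j i //
        ∀ a : PartSet f₀ i j, (g a).1 ≠ fM a.1} =
        Nat.card {g : PartSet f₀ i j ≃ PartSet f₀ j i // ∀ a c, v a = some c → g a ≠ c} :=
      Nat.card_congr (Equiv.subtypeEquivRight (fun g => (hQiff g).symm))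
    rw [htot, hcards]
    calc (Fintype.card (PartSet f₀ i j)).factorial
        ≤ 3 * numDerangements (Fintype.card (PartSet f₀ i j)) := fact_le_three_mul _ hn
      _ ≤ 3 * Nat.card {g : PartSet f₀ i j ≃ PartSet f₀ j i //
            ∀ a c, v a = some c → g a ≠ c} :=
          Nat.mul_le_mul_left 3 (numDerangements_le_card_avoid g₀ v hvinj)

end PairBound

/-- Let `r ≥ 2`, let `G'` be a complete `r`-partite graph with parts `V' i = β i`, let
`M'` be a perfect matching of `G'`, and let `α = sup_{N ≥ 2} N!/d_N`.  For a perfect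
matching `P` of `G'` let `S(P) = (P_{i,j})`, where `P_{i,j}` is the set of vertices of
`V' i` matched by `P` into `V' j`.  If `S = S(P₀)` for some perfect matching `P₀` with
`P₀ ∩ M' = ∅`, then the number of perfect matchings `U` with `S(U) = S` is at most
`α^(r choose 2)` times the number of perfect matchings `U` with `S(U) = S` and
`U ∩ M' = ∅`. -/
theorem statement17 (r : ℕ) (hr : 2 ≤ r) (β : Fin r → Type) [∀ i, Fintype (β i)]
    (M' P₀ : (completeMultipartiteGraph β).Subgraph)
    (hM' : M'.IsPerfectMatching) (hP₀ : P₀.IsPerfectMatching)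
    (hdisj : P₀.edgeSet ∩ M'.edgeSet = ∅) :
    (Nat.card {U : (completeMultipartiteGraph β).Subgraph //
        U.IsPerfectMatching ∧ ∀ i j : Fin r,
          {x : Σ i', β i' | x.1 = i ∧ ∃ y, U.Adj x y ∧ y.1 = j} =
            {x : Σ i', β i' | x.1 = i ∧ ∃ y, P₀.Adj x y ∧ y.1 = j}} : ℝ) ≤
      alphaDer ^ (r.choose 2) *
        (Nat.card {U : (completeMultipartiteGraph β).Subgraph //
          U.IsPerfectMatching ∧ (∀ i j : Fin r,
            {x : Σ i', β i' | x.1 = i ∧ ∃ y, U.Adj x y ∧ y.1 = j} =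
              {x : Σ i', β i' | x.1 = i ∧ ∃ y, P₀.Adj x y ∧ y.1 = j}) ∧
            U.edgeSet ∩ M'.edgeSet = ∅} : ℝ) := by
  classical
  set f₀ := mFun hP₀ with hf₀
  set fM := mFun hM' with hfM
  have hne : ∀ x : Σ i, β i, x.1 ≠ (f₀ x).1 := mFun_ne_fst hP₀
  have hdisj' : ∀ x, f₀ x ≠ fM x := (disj_iff hP₀ hM').mp hdisj
  have hneOf : ∀ (f : (Σ i, β i) → Σ i, β i), (∀ x, (f x).1 = (f₀ x).1) →
      ∀ x, x.1 ≠ (f x).1 := fun f hp x => by rw [hp x]; exact hne x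
  -- the first equivalence
  let E₁ : {U : (completeMultipartiteGraph β).Subgraph //
      U.IsPerfectMatching ∧ ∀ i j : Fin r,
        {x : Σ i', β i' | x.1 = i ∧ ∃ y, U.Adj x y ∧ y.1 = j} =
          {x : Σ i', β i' | x.1 = i ∧ ∃ y, P₀.Adj x y ∧ y.1 = j}} ≃
      {f : (Σ i, β i) → Σ i, β i // Involutive f ∧ ∀ x, (f x).1 = (f₀ x).1} :=
    { toFun := fun u => ⟨mFun u.2.1, mFun_invol u.2.1, (pattern_iff u.2.1 hP₀).mp u.2.2⟩
      invFun := fun f => ⟨subOf f.1 f.2.1 (hneOf f.1 f.2.2),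
        subOf_isPerfectMatching _ _ _,
        (pattern_iff (subOf_isPerfectMatching _ _ _) hP₀).mpr
          (by rw [mFun_subOf f.1 f.2.1 (hneOf f.1 f.2.2)]; exact f.2.2)⟩
      left_inv := fun u => Subtype.ext (subOf_mFun u.2.1)
      right_inv := fun f => Subtype.ext (mFun_subOf f.1 f.2.1 (hneOf f.1 f.2.2)) }
  -- the second equivalence
  let E₂ : {U : (completeMultipartiteGraph β).Subgraph //
      U.IsPerfectMatching ∧ (∀ i j : Fin r,
        {x : Σ i', β i' | x.1 = i ∧ ∃ y, U.Adj x y ∧ y.1 = j} =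
          {x : Σ i', β i' | x.1 = i ∧ ∃ y, P₀.Adj x y ∧ y.1 = j}) ∧
        U.edgeSet ∩ M'.edgeSet = ∅} ≃
      {f : {f : (Σ i, β i) → Σ i, β i // Involutive f ∧ ∀ x, (f x).1 = (f₀ x).1} //
        ∀ x, f.1 x ≠ fM x} :=
    { toFun := fun u => ⟨⟨mFun u.2.1, mFun_invol u.2.1, (pattern_iff u.2.1 hP₀).mp u.2.2.1⟩,
        (disj_iff u.2.1 hM').mp u.2.2.2⟩
      invFun := fun q => ⟨subOf q.1.1 q.1.2.1 (hneOf _ q.1.2.2),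
        subOf_isPerfectMatching _ _ _,
        (pattern_iff (subOf_isPerfectMatching _ _ _) hP₀).mpr
          (by rw [mFun_subOf q.1.1 q.1.2.1 (hneOf q.1.1 q.1.2.2)]; exact q.1.2.2),
        (disj_iff (subOf_isPerfectMatching _ _ _) hM').mpr
          (by rw [mFun_subOf q.1.1 q.1.2.1 (hneOf q.1.1 q.1.2.2)]; exact q.2)⟩
      left_inv := fun u => Subtype.ext (subOf_mFun u.2.1)
      right_inv := fun q => Subtype.ext (Subtype.ext (mFun_subOf q.1.1 q.1.2.1 (hneOf q.1.1 q.1.2.2))) }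
  have hN1 : Nat.card {U : (completeMultipartiteGraph β).Subgraph //
      U.IsPerfectMatching ∧ ∀ i j : Fin r,
        {x : Σ i', β i' | x.1 = i ∧ ∃ y, U.Adj x y ∧ y.1 = j} =
          {x : Σ i', β i' | x.1 = i ∧ ∃ y, P₀.Adj x y ∧ y.1 = j}} =
      ∏ p : Pairs r, Nat.card (PartSet f₀ p.1.1 p.1.2 ≃ PartSet f₀ p.1.2 p.1.1) := by
    rw [Nat.card_congr (E₁.trans (masterEquiv f₀ hne)), Nat.card_pi]
  have hN2 : Nat.card {U : (completeMultipartiteGraph β).Subgraph //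
      U.IsPerfectMatching ∧ (∀ i j : Fin r,
        {x : Σ i', β i' | x.1 = i ∧ ∃ y, U.Adj x y ∧ y.1 = j} =
          {x : Σ i', β i' | x.1 = i ∧ ∃ y, P₀.Adj x y ∧ y.1 = j}) ∧
        U.edgeSet ∩ M'.edgeSet = ∅} =
      ∏ p : Pairs r, Nat.card {g : PartSet f₀ p.1.1 p.1.2 ≃ PartSet f₀ p.1.2 p.1.1 //
        ∀ a : PartSet f₀ p.1.1 p.1.2, (g a).1 ≠ fM a.1} := by
    have Eq3 : {f : {f : (Σ i, β i) → Σ i, β i // Involutive f ∧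
          ∀ x, (f x).1 = (f₀ x).1} // ∀ x, f.1 x ≠ fM x} ≃
        {w : ∀ p : Pairs r, (PartSet f₀ p.1.1 p.1.2 ≃ PartSet f₀ p.1.2 p.1.1) //
          ∀ p : Pairs r, ∀ a : PartSet f₀ p.1.1 p.1.2, ((w p) a).1 ≠ fM a.1} :=
      Equiv.subtypeEquiv (masterEquiv f₀ hne) (masterEquiv_avoid f₀ hne fM (mFun_invol hM'))
    have Eq4 : {w : ∀ p : Pairs r, (PartSet f₀ p.1.1 p.1.2 ≃ PartSet f₀ p.1.2 p.1.1) //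
          ∀ p : Pairs r, ∀ a : PartSet f₀ p.1.1 p.1.2, ((w p) a).1 ≠ fM a.1} ≃
        ∀ p : Pairs r, {g : PartSet f₀ p.1.1 p.1.2 ≃ PartSet f₀ p.1.2 p.1.1 //
          ∀ a : PartSet f₀ p.1.1 p.1.2, (g a).1 ≠ fM a.1} :=
      Equiv.subtypePiEquivPi
        (p := fun (p : Pairs r) (g : PartSet f₀ p.1.1 p.1.2 ≃ PartSet f₀ p.1.2 p.1.1) =>
          ∀ a : PartSet f₀ p.1.1 p.1.2, (g a).1 ≠ fM a.1)
    rw [Nat.card_congr (E₂.trans (Eq3.trans Eq4)), Nat.card_pi]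
  have hnat : Nat.card {U : (completeMultipartiteGraph β).Subgraph //
      U.IsPerfectMatching ∧ ∀ i j : Fin r,
        {x : Σ i', β i' | x.1 = i ∧ ∃ y, U.Adj x y ∧ y.1 = j} =
          {x : Σ i', β i' | x.1 = i ∧ ∃ y, P₀.Adj x y ∧ y.1 = j}} ≤
      3 ^ (r.choose 2) * Nat.card {U : (completeMultipartiteGraph β).Subgraph //
      U.IsPerfectMatching ∧ (∀ i j : Fin r,
        {x : Σ i', β i' | x.1 = i ∧ ∃ y, U.Adj x y ∧ y.1 = j} =
          {x : Σ i', β i' | x.1 = i ∧ ∃ y, P₀.Adj x y ∧ y.1 = j}) ∧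
        U.edgeSet ∩ M'.edgeSet = ∅} := by
    rw [hN1, hN2]
    calc ∏ p : Pairs r, Nat.card (PartSet f₀ p.1.1 p.1.2 ≃ PartSet f₀ p.1.2 p.1.1)
        ≤ ∏ p : Pairs r, 3 * Nat.card {g : PartSet f₀ p.1.1 p.1.2 ≃ PartSet f₀ p.1.2 p.1.1 //
            ∀ a : PartSet f₀ p.1.1 p.1.2, (g a).1 ≠ fM a.1} :=
          Finset.prod_le_prod' (fun p _ =>
            pair_bound f₀ fM (mFun_invol hP₀) (mFun_invol hM') hdisj' p.1.1 p.1.2)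
      _ = 3 ^ (Finset.univ : Finset (Pairs r)).card *
            ∏ p : Pairs r, Nat.card {g : PartSet f₀ p.1.1 p.1.2 ≃ PartSet f₀ p.1.2 p.1.1 //
              ∀ a : PartSet f₀ p.1.1 p.1.2, (g a).1 ≠ fM a.1} := by
          rw [Finset.prod_mul_distrib, Finset.prod_const]
      _ = 3 ^ (r.choose 2) *
            ∏ p : Pairs r, Nat.card {g : PartSet f₀ p.1.1 p.1.2 ≃ PartSet f₀ p.1.2 p.1.1 //
              ∀ a : PartSet f₀ p.1.1 p.1.2, (g a).1 ≠ fM a.1} := by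
          rw [Finset.card_univ, ← Nat.card_eq_fintype_card, card_pairs]
  rw [alphaDer_eq_three]
  calc (Nat.card {U : (completeMultipartiteGraph β).Subgraph //
      U.IsPerfectMatching ∧ ∀ i j : Fin r,
        {x : Σ i', β i' | x.1 = i ∧ ∃ y, U.Adj x y ∧ y.1 = j} =
          {x : Σ i', β i' | x.1 = i ∧ ∃ y, P₀.Adj x y ∧ y.1 = j}} : ℝ)
      ≤ ((3 ^ (r.choose 2) * Nat.card {U : (completeMultipartiteGraph β).Subgraph //
      U.IsPerfectMatching ∧ (∀ i j : Fin r,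
        {x : Σ i', β i' | x.1 = i ∧ ∃ y, U.Adj x y ∧ y.1 = j} =
          {x : Σ i', β i' | x.1 = i ∧ ∃ y, P₀.Adj x y ∧ y.1 = j}) ∧
        U.edgeSet ∩ M'.edgeSet = ∅} : ℕ) : ℝ) := Nat.cast_le.mpr hnat
    _ = _ := by push_cast; ring
end
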